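/- arXiv:1512.04237 — 3 statements merged into one kernel-verified Lean document; each statement's English description precedes it below -/
import Mathlib

section
/- Let n ≥ 2 and let N be a non-trivial normal subgroup of the free group F_n. Then δ(N) > (1/2)·log(2n−1), i.e. the cogrowth η(F_n/N) = δ(N)/log(2n−1) is strictly greater than 1/2. -/
open Filter Real

noncomputable section

section CogrowthInfra
open FreeGroup List
variable {n : ℕ}
abbrev Ltr (n : ℕ) := Fin n × Bool
def invL (x : Ltr n) : Ltr n := (x.1, !x.2)

lemma invL_invL (x : Ltr n) : invL (invL x) = x := by cases x; simp [invL]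

lemma eq_invL_iff (x y : Ltr n) : y = invL x ↔ (x.1 = y.1 ∧ x.2 = !y.2) := by
  cases x with | mk xa xb => cases y with | mk ya yb =>
  simp only [invL, Prod.mk.injEq]
  constructor
  · rintro ⟨h1, h2⟩; exact ⟨h1.symm, by cases yb <;> simp_all⟩
  · rintro ⟨h1, h2⟩; exact ⟨h1.symm, by cases yb <;> simp_all⟩

def RedW (l : List (Ltr n)) : Prop := List.Chain' (fun x y => y ≠ invL x) l

theorem RedW.reduce_eq {l : List (Ltr n)} (h : RedW l) : FreeGroup.reduce l = l := by
  induction l with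
  | nil => rfl
  | cons x t ih =>
    have ht : RedW t := h.tail
    rw [reduce.cons, ih ht]
    cases t with
    | nil => rfl
    | cons hd tl =>
      have hx : hd ≠ invL x := (List.isChain_cons_cons.mp h).1
      have hc : ¬ (x.1 = hd.1 ∧ x.2 = !hd.2) := fun hh => hx ((eq_invL_iff x hd).mpr hh)
      simp [hc]

theorem RedW.toWord_mk {l : List (Ltr n)} (h : RedW l) : (FreeGroup.mk l).toWord = l := by
  rw [FreeGroup.toWord_mk, h.reduce_eq]

theorem RedW.norm_mk {l : List (Ltr n)} (h : RedW l) : (FreeGroup.mk l).norm = l.length := by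
  rw [FreeGroup.norm, h.toWord_mk]

theorem redW_toWord (g : FreeGroup (Fin n)) : RedW g.toWord := by
  have hred : FreeGroup.reduce g.toWord = g.toWord := FreeGroup.reduce_toWord g
  set l := g.toWord with hl
  clear_value l
  clear hl
  induction l with
  | nil => exact List.isChain_nil
  | cons x t ih =>
    -- from reduce (x :: t) = x :: t we derive reduce t = t and head condition
    have hlen : ∀ (L : List (Ltr n)), (FreeGroup.reduce L).length ≤ L.length :=
      fun L => FreeGroup.Red.length_le (FreeGroup.reduce.red)
    rw [reduce.cons] at hred
    rcases hrt : FreeGroup.reduce t with _ | ⟨hd, tl⟩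
    · rw [hrt] at hred
      simp at hred
      subst hred
      exact List.isChain_singleton x
    · rw [hrt] at hred
      dsimp only at hred
      by_cases hc : (x.1 = hd.1 ∧ x.2 = !hd.2)
      · rw [if_pos hc] at hred
        -- hred : tl = x :: t, but length tl < length (x :: t)
        exfalso
        have h1 : (FreeGroup.reduce t).length ≤ t.length := hlen t
        rw [hrt] at h1
        simp only [List.length_cons] at h1
        have h2 : tl.length = t.length + 1 := by rw [hred]; simp
        omega
      · rw [if_neg hc] at hred
        -- hred : x :: hd :: tl = x :: t
        have heq : hd :: tl = t := by
          injection hred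
        have hrt' : FreeGroup.reduce t = t := by rw [hrt, heq]
        have hRt := ih hrt'
        rw [RedW, List.Chain', List.isChain_cons]
        refine ⟨?_, hRt⟩
        · intro y hy
          rw [← heq] at hy
          simp at hy
          subst hy
          intro hbad
          exact hc ((eq_invL_iff x hd).mp hbad)

lemma RedW.append {A B : List (Ltr n)} (hA : RedW A) (hB : RedW B)
    (h : ∀ x ∈ A.getLast?, ∀ y ∈ B.head?, y ≠ invL x) : RedW (A ++ B) :=
  List.isChain_append.mpr ⟨hA, hB, h⟩

lemma invRev_eq_map_reverse (l : List (Ltr n)) :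
    FreeGroup.invRev l = (l.map invL).reverse := by
  simp [FreeGroup.invRev, invL]

lemma RedW.invRev {l : List (Ltr n)} (h : RedW l) : RedW (FreeGroup.invRev l) := by
  rw [invRev_eq_map_reverse, RedW, List.Chain', List.isChain_reverse]
  apply List.isChain_map_of_isChain (f := invL) (R := fun x y => flip (fun x y => y ≠ invL x) (invL x) (invL y))
  · intro a b hab
    exact hab
  · -- need Chain' (fun a b => flip ... (invL a) (invL b)) l, i.e. invL a ≠ invL (invL b) = b
    apply h.imp
    intro a b hab
    simp only [flip, invL_invL]
    exact fun heq => hab heq.symm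

lemma head?_invRev (l : List (Ltr n)) :
    (FreeGroup.invRev l).head? = l.getLast?.map invL := by
  rw [invRev_eq_map_reverse, List.head?_reverse, List.getLast?_map]

lemma getLast?_invRev (l : List (Ltr n)) :
    (FreeGroup.invRev l).getLast? = l.head?.map invL := by
  rw [invRev_eq_map_reverse, List.getLast?_reverse, List.head?_map]

lemma invRev_append (A B : List (Ltr n)) :
    FreeGroup.invRev (A ++ B) = FreeGroup.invRev B ++ FreeGroup.invRev A := by
  simp [FreeGroup.invRev]

section ChainWords
variable {Q : ℕ} (ι : Ltr n ≃ Fin (Q + 1))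

/-- the next letter: given previous letter `prev` and a choice `t` among `Q` options,
produce a letter different from `invL prev`. -/
def nxt (prev : Ltr n) (t : Fin Q) : Ltr n := ι.symm ((ι (invL prev)).succAbove t)

lemma nxt_ne (prev : Ltr n) (t : Fin Q) : nxt ι prev t ≠ invL prev := by
  intro h
  apply Fin.succAbove_ne (ι (invL prev)) t
  have := congrArg ι h
  simpa [nxt] using this

lemma nxt_injective (prev : Ltr n) : Function.Injective (nxt ι prev) := by
  intro t t' h
  have := Fin.succAbove_right_injective (p := ι (invL prev)) (ι.symm.injective h)
  exact this

/-- chain word: sequence of letters each differing from the inverse of its predecessor. -/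
def cW (prev : Ltr n) : List (Fin Q) → List (Ltr n)
  | [] => []
  | t :: z => nxt ι prev t :: cW (nxt ι prev t) z

@[simp] lemma cW_nil (prev : Ltr n) : cW ι prev [] = [] := rfl
@[simp] lemma cW_cons (prev : Ltr n) (t : Fin Q) (z : List (Fin Q)) :
    cW ι prev (t :: z) = nxt ι prev t :: cW ι (nxt ι prev t) z := rfl

lemma cW_length (prev : Ltr n) (z : List (Fin Q)) : (cW ι prev z).length = z.length := by
  induction z generalizing prev with
  | nil => rfl
  | cons t z ih => simp [ih]

lemma cW_chain (prev : Ltr n) (z : List (Fin Q)) :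
    List.Chain' (fun x y => y ≠ invL x) (prev :: cW ι prev z) := by
  induction z generalizing prev with
  | nil => exact List.isChain_singleton prev
  | cons t z ih =>
    rw [cW_cons, List.Chain', List.isChain_cons_cons]
    exact ⟨nxt_ne ι prev t, ih (nxt ι prev t)⟩

lemma cW_injective (prev : Ltr n) : ∀ z z' : List (Fin Q),
    cW ι prev z = cW ι prev z' → z = z' := by
  intro z
  induction z generalizing prev with
  | nil => intro z' h; cases z' with
    | nil => rfl
    | cons t z' => simp at h
  | cons t z ih =>
    intro z' h
    cases z' with
    | nil => simp at h
    | cons t' z' =>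
      simp only [cW_cons, List.cons.injEq] at h
      have ht : t = t' := nxt_injective ι prev h.1
      subst ht
      rw [ih (nxt ι prev t) z' h.2]

end ChainWords

section Segments
variable {Q : ℕ} (ι : Ltr n ≃ Fin (Q + 1)) (a b e p₃ : Ltr n)

def pTwo (y : Ltr n) : Ltr n := if invL y = a then e else a

lemma pTwo_ne (hea : e ≠ a) (y : Ltr n) : pTwo a e y ≠ invL y := by
  unfold pTwo
  split
  · rename_i h; rw [h]; exact hea
  · rename_i h; exact fun hh => h hh.symm

lemma pTwo_mem (y : Ltr n) : pTwo a e y = a ∨ pTwo a e y = e := by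
  unfold pTwo; split
  · exact Or.inr rfl
  · exact Or.inl rfl

def segBody (z : List (Fin Q)) : List (Ltr n) := e :: cW ι e z

lemma segBody_ne_nil (z : List (Fin Q)) : segBody ι e z ≠ [] := by simp [segBody]

def seg (z : List (Fin Q)) : List (Ltr n) :=
  segBody ι e z ++ [pTwo a e ((segBody ι e z).getLast (segBody_ne_nil ι e z)), p₃]

lemma seg_head? (z : List (Fin Q)) : (seg ι a e p₃ z).head? = some e := by
  simp [seg, segBody]

lemma seg_getLast? (z : List (Fin Q)) : (seg ι a e p₃ z).getLast? = some p₃ := by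
  unfold seg
  rw [List.getLast?_append]
  rfl

lemma seg_length (z : List (Fin Q)) : (seg ι a e p₃ z).length = z.length + 3 := by
  simp [seg, segBody, cW_length]

lemma seg_redw (hea : e ≠ a) (hp3a : p₃ ≠ invL a) (hp3e : p₃ ≠ invL e)
    (z : List (Fin Q)) : RedW (seg ι a e p₃ z) := by
  unfold seg
  apply RedW.append
  · exact cW_chain ι e z
  · -- RedW [pTwo .. , p₃]
    rw [RedW, List.Chain', List.isChain_cons_cons]
    refine ⟨?_, List.isChain_singleton _⟩
    rcases pTwo_mem a e ((segBody ι e z).getLast (segBody_ne_nil ι e z)) with h | h <;> rw [h]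
    · exact fun hh => hp3a (by rw [hh])
    · exact fun hh => hp3e (by rw [hh])
  · intro x hx y hy
    simp only [List.head?_cons, Option.mem_def, Option.some.injEq] at hy
    subst hy
    rw [List.getLast?_eq_getLast (segBody_ne_nil ι e z), Option.mem_def,
      Option.some.injEq] at hx
    subst hx
    exact pTwo_ne a e hea _
end Segments

section Segments2
variable {Q : ℕ} (ι : Ltr n ≃ Fin (Q + 1)) (a e p₃ : Ltr n)

lemma seg_injective {z z' : List (Fin Q)} (h : seg ι a e p₃ z = seg ι a e p₃ z') :
    z = z' := by
  have hlen : z.length = z'.length := by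
    have := congrArg List.length h
    rw [seg_length, seg_length] at this
    omega
  have hbody : segBody ι e z = segBody ι e z' := by
    have h2 := congrArg (List.take (z.length + 1)) h
    unfold seg at h2
    rw [List.take_append_of_le_length, List.take_append_of_le_length] at h2
    · have hb1 : (segBody ι e z).take (z.length + 1) = segBody ι e z := by
        apply List.take_of_length_le
        simp [segBody, cW_length]
      have hb2 : (segBody ι e z').take (z.length + 1) = segBody ι e z' := by
        apply List.take_of_length_le
        simp [segBody, cW_length, hlen]
      rw [hb1, hb2] at h2
      exact h2
    · simp [segBody, cW_length, hlen]
    · simp [segBody, cW_length]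
  unfold segBody at hbody
  simp only [List.cons.injEq, true_and] at hbody
  exact cW_injective ι e z z' hbody

end Segments2

section Blocks
variable (a b e p₃ : Ltr n) (l : List (Ltr n))

def GoodSeg (u : List (Ltr n)) : Prop :=
  RedW u ∧ u.head? = some e ∧ u.getLast? = some p₃

lemma GoodSeg.ne_nil {u : List (Ltr n)} (h : GoodSeg e p₃ u) : u ≠ [] := by
  intro hnil; rw [hnil] at h; simp [GoodSeg] at h

def blockL : List (List (Ltr n)) → List (Ltr n)
  | [] => []
  | u :: rest => u ++ (l ++ (blockL rest ++ FreeGroup.invRev u))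

@[simp] lemma blockL_nil : blockL l [] = ([] : List (Ltr n)) := rfl
@[simp] lemma blockL_cons (u : List (Ltr n)) (rest : List (List (Ltr n))) :
    blockL l (u :: rest) = u ++ (l ++ (blockL l rest ++ FreeGroup.invRev u)) := rfl

lemma blockL_head? {us : List (List (Ltr n))} (hus : us ≠ [])
    (hgs : ∀ u ∈ us, GoodSeg e p₃ u) : (blockL l us).head? = some e := by
  cases us with
  | nil => exact absurd rfl hus
  | cons u rest =>
    have hg := hgs u (List.mem_cons_self)
    rw [blockL_cons, List.head?_append_of_ne_nil _ (hg.ne_nil e p₃)]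
    exact hg.2.1

lemma blockL_getLast? {us : List (List (Ltr n))} (hus : us ≠ [])
    (hgs : ∀ u ∈ us, GoodSeg e p₃ u) : (blockL l us).getLast? = some (invL e) := by
  cases us with
  | nil => exact absurd rfl hus
  | cons u rest =>
    have hg := hgs u (List.mem_cons_self)
    have hinv : (FreeGroup.invRev u) ≠ [] := by
      intro hh
      have := congrArg List.length hh
      rw [FreeGroup.invRev_length] at this
      exact (hg.ne_nil e p₃) (List.length_eq_zero_iff.mp this)
    rw [blockL_cons, List.getLast?_append_of_ne_nil, List.getLast?_append_of_ne_nil,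
      List.getLast?_append_of_ne_nil _ hinv]
    · rw [getLast?_invRev, hg.2.1]
      rfl
    · simp [hinv]
    · simp [hinv]

lemma invL_injective : Function.Injective (invL (n := n)) := by
  intro x y h
  have := congrArg invL h
  rwa [invL_invL, invL_invL] at this

lemma blockL_redw (hredl : RedW l) (hla : l.head? = some a) (hlb : l.getLast? = some b)
    (heb : e ≠ invL b) (hp3a : p₃ ≠ invL a) (hp3b : p₃ ≠ b) (hp3e : p₃ ≠ invL e) :
    ∀ us : List (List (Ltr n)), (∀ u ∈ us, GoodSeg e p₃ u) → RedW (blockL l us) := by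
  intro us
  induction us with
  | nil => intro _; exact List.isChain_nil
  | cons u rest ih =>
    intro hgs
    have hg := hgs u (List.mem_cons_self)
    have hrest : ∀ u ∈ rest, GoodSeg e p₃ u := fun v hv => hgs v (List.mem_cons_of_mem _ hv)
    have hinvu : FreeGroup.invRev u ≠ [] := by
      intro hh
      have := congrArg List.length hh
      rw [FreeGroup.invRev_length] at this
      exact (hg.ne_nil e p₃) (List.length_eq_zero_iff.mp this)
    rw [blockL_cons]
    apply RedW.append hg.1
    · apply RedW.append hredl
      · apply RedW.append (ih hrest) hg.1.invRev
        -- junction B → invRev u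
        intro x hx y hy
        rcases List.eq_nil_or_concat rest with hrnil | _
        · rw [hrnil] at hx; simp at hx
        · have hxe : x = invL e := by
            rw [blockL_getLast? e p₃ l (by rename_i h; rcases h with ⟨L, a', rfl⟩; simp) hrest] at hx
            symm; simpa using hx
          have hyp : y = invL p₃ := by
            rw [head?_invRev, hg.2.2] at hy
            symm; simpa using hy
          rw [hxe, hyp, invL_invL]
          intro hh
          exact hp3e (invL_injective (by rw [invL_invL, hh]))
      · -- junction l → B ++ invRev u
        intro x hx y hy
        have hxb : x = b := by rw [hlb] at hx; symm; simpa using hx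
        subst hxb
        rcases List.eq_nil_or_concat rest with hrnil | hrc
        · rw [hrnil] at hy
          simp only [blockL_nil, List.nil_append] at hy
          rw [head?_invRev, hg.2.2] at hy
          have hyp : y = invL p₃ := by symm; simpa using hy
          rw [hyp]
          exact fun hh => hp3b (invL_injective hh)
        · rw [List.head?_append_of_ne_nil] at hy
          · have hye : y = e := by
              rw [blockL_head? e p₃ l (by rcases hrc with ⟨L, a', rfl⟩; simp) hrest] at hy
              symm; simpa using hy
            rw [hye]; exact heb
          · rcases hrc with ⟨L, a', rfl⟩
            intro hh
            have h0 := blockL_head? e p₃ l (us := L.concat a') (by simp) hrest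
            rw [hh] at h0
            simp at h0
    · -- junction u → l ++ ...
      intro x hx y hy
      have hxp : x = p₃ := by rw [hg.2.2] at hx; symm; simpa using hx
      have hya : y = a := by
        rw [List.head?_append_of_ne_nil _ (by intro hh; rw [hh] at hla; simp at hla)] at hy
        rw [hla] at hy; symm; simpa using hy
      rw [hxp, hya]
      intro hh
      exact hp3a (by rw [hh, invL_invL])

lemma blockL_length : ∀ us : List (List (Ltr n)),
    (blockL l us).length = 2 * (us.map List.length).sum + us.length * l.length := by
  intro us
  induction us with
  | nil => simp
  | cons u rest ih =>
    simp only [blockL_cons, List.length_append, FreeGroup.invRev_length, ih,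
      List.map_cons, List.sum_cons, List.length_cons]
    ring

lemma blockL_mem (N : Subgroup (FreeGroup (Fin n))) [hN : N.Normal]
    (hw : FreeGroup.mk l ∈ N) :
    ∀ us : List (List (Ltr n)), FreeGroup.mk (blockL l us) ∈ N := by
  intro us
  induction us with
  | nil => rw [blockL_nil, ← FreeGroup.one_eq_mk]; exact one_mem N
  | cons u rest ih =>
    rw [blockL_cons, ← FreeGroup.mul_mk, ← FreeGroup.mul_mk, ← FreeGroup.mul_mk,
      ← FreeGroup.inv_mk]
    have : FreeGroup.mk u * (FreeGroup.mk l * (FreeGroup.mk (blockL l rest) * (FreeGroup.mk u)⁻¹))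
        = FreeGroup.mk u * (FreeGroup.mk l * FreeGroup.mk (blockL l rest)) * (FreeGroup.mk u)⁻¹ := by
      group
    rw [this]
    exact hN.conj_mem _ (mul_mem hw ih) _

lemma blockL_eq : ∀ us : List (List (Ltr n)),
    blockL l us = (us.map (· ++ l)).flatten ++ FreeGroup.invRev us.flatten := by
  intro us
  induction us with
  | nil => simp [FreeGroup.invRev]
  | cons u rest ih =>
    rw [blockL_cons, ih]
    simp only [List.map_cons, List.flatten_cons]
    rw [invRev_append (u) (rest.flatten)]
    simp [List.append_assoc]

lemma flatten_head_e (us : List (List (Ltr n))) (h : ∀ u ∈ us, u.head? = some e) :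
    us.flatten = [] ∨ us.flatten.head? = some e := by
  cases us with
  | nil => left; rfl
  | cons v rest =>
    right
    have hv := h v (List.mem_cons_self)
    have hvne : v ≠ [] := by intro hh; rw [hh] at hv; simp at hv
    rw [List.flatten_cons, List.head?_append_of_ne_nil _ hvne]
    exact hv

lemma parse_key {u u' G G' F F' : List (Ltr n)} (hea : e ≠ a)
    (hla : l.head? = some a) (hlen : u.length ≤ u'.length)
    (h1 : u ++ G = u' ++ G') (h2 : u ++ (l ++ F) = u' ++ (l ++ F'))
    (hG : G = [] ∨ G.head? = some e) : u = u' := by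
  have hlne : l ≠ [] := by intro hh; rw [hh] at hla; simp at hla
  -- u' = u ++ t
  have hu : u = u'.take u.length := by
    have := congrArg (List.take u.length) h1
    rw [List.take_append_of_le_length (le_refl _), List.take_append_of_le_length hlen,
      List.take_length] at this
    exact this
  have hsplit : u' = u ++ u'.drop u.length := by
    conv_lhs => rw [← List.take_append_drop u.length u']
    rw [← hu]
  set t := u'.drop u.length with ht
  rcases List.eq_nil_or_concat t with htnil | htne
  · rw [hsplit, htnil, List.append_nil]
  · have htne' : t ≠ [] := by rcases htne with ⟨L, x, hLx⟩; rw [hLx]; simp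
    exfalso
    rw [hsplit, List.append_assoc] at h2 h1
    have h2' : l ++ F = t ++ (l ++ F') := List.append_cancel_left h2
    have h1' : G = t ++ G' := List.append_cancel_left h1
    -- head of t is a (from h2') and e (from h1')
    have hta : t.head? = some a := by
      have := congrArg List.head? h2'
      rw [List.head?_append_of_ne_nil _ hlne, List.head?_append_of_ne_nil _ htne', hla] at this
      exact this.symm
    have hte : t.head? = some e := by
      have hGne : G ≠ [] := by
        intro hh; rw [hh] at h1'
        have := congrArg List.length h1'
        simp only [hh, List.length_nil, List.length_append] at this
        exact htne' (List.length_eq_zero_iff.mp (by omega))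
      rcases hG with hG | hG
      · exact absurd hG hGne
      · rw [h1', List.head?_append_of_ne_nil _ htne'] at hG
        exact hG
    rw [hta] at hte
    injection hte with hte'
    exact hea hte'.symm

lemma parse (hea : e ≠ a) (hla : l.head? = some a) :
    ∀ us us' : List (List (Ltr n)), us.length = us'.length →
    (∀ u ∈ us, u.head? = some e) → (∀ u ∈ us', u.head? = some e) →
    us.flatten = us'.flatten →
    (us.map (· ++ l)).flatten = (us'.map (· ++ l)).flatten → us = us' := by
  intro us
  induction us with
  | nil =>
    intro us' hlen _ _ _ _
    cases us' with
    | nil => rfl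
    | cons _ _ => simp at hlen
  | cons u rest ih =>
    intro us' hlen hh hh' hfl hmfl
    cases us' with
    | nil => simp at hlen
    | cons u' rest' =>
      have hfl' : u ++ rest.flatten = u' ++ rest'.flatten := by
        simpa using hfl
      have hmfl' : u ++ (l ++ (rest.map (· ++ l)).flatten)
          = u' ++ (l ++ (rest'.map (· ++ l)).flatten) := by
        simpa [List.append_assoc] using hmfl
      have hrest : ∀ v ∈ rest, v.head? = some e := fun v hv => hh v (List.mem_cons_of_mem _ hv)
      have hrest' : ∀ v ∈ rest', v.head? = some e := fun v hv => hh' v (List.mem_cons_of_mem _ hv)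
      have huu : u = u' := by
        rcases le_total u.length u'.length with hle | hle
        · exact parse_key a e l hea hla hle hfl' hmfl' (flatten_head_e e rest hrest)
        · exact (parse_key a e l hea hla hle hfl'.symm hmfl'.symm
            (flatten_head_e e rest' hrest')).symm
      subst huu
      have h1 : rest.flatten = rest'.flatten := List.append_cancel_left hfl'
      have h2 : (rest.map (· ++ l)).flatten = (rest'.map (· ++ l)).flatten :=
        List.append_cancel_left (List.append_cancel_left hmfl')
      have := ih rest' (by simpa using hlen) hrest hrest' h1 h2
      rw [this]
end Blocks

section Ball
variable (N : Subgroup (FreeGroup (Fin n))) (R : ℕ)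

def ballEnc (g : {g : FreeGroup (Fin n) // g ∈ N ∧ FreeGroup.norm g ≤ R}) :
    Fin (R + 1) → Option (Ltr n) := fun i => (FreeGroup.toWord g.val)[(i : ℕ)]?

lemma ballEnc_injective : Function.Injective (ballEnc N R) := by
  intro g g' h
  have hlen : (FreeGroup.toWord g.val).length ≤ R := g.prop.2
  have hlen' : (FreeGroup.toWord g'.val).length ≤ R := g'.prop.2
  have : FreeGroup.toWord g.val = FreeGroup.toWord g'.val := by
    apply List.ext_getElem?
    intro i
    by_cases hi : i < R + 1
    · exact congrFun h ⟨i, hi⟩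
    · rw [List.getElem?_eq_none (by omega), List.getElem?_eq_none (by omega)]
  exact Subtype.ext (FreeGroup.toWord_injective this)

instance ball_finite : Finite {g : FreeGroup (Fin n) // g ∈ N ∧ FreeGroup.norm g ≤ R} :=
  Finite.of_injective _ (ballEnc_injective N R)

lemma ball_card_le : Nat.card {g : FreeGroup (Fin n) // g ∈ N ∧ FreeGroup.norm g ≤ R}
    ≤ (2 * n + 1) ^ (R + 1) := by
  have h := Nat.card_le_card_of_injective _ (ballEnc_injective N R)
  rw [Nat.card_eq_fintype_card (α := Fin (R+1) → Option (Ltr n))] at h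
  rw [Fintype.card_fun] at h
  simpa [Fintype.card_option, Fintype.card_prod, mul_comm] using h

end Ball

lemma exists_ltr_notin (hn : 2 ≤ n) (x y z : Ltr n) : ∃ c : Ltr n, c ≠ x ∧ c ≠ y ∧ c ≠ z := by
  by_contra h
  push_neg at h
  have hsub : (Finset.univ : Finset (Ltr n)) ⊆ {x, y, z} := by
    intro c _
    by_cases h1 : c = x
    · simp [h1]
    · by_cases h2 : c = y
      · simp [h2]
      · simp [h c h1 h2]
  have hcard := Finset.card_le_card hsub
  have h3 : ({x, y, z} : Finset (Ltr n)).card ≤ 3 := by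
    apply le_trans (Finset.card_insert_le _ _)
    have := Finset.card_insert_le y ({z} : Finset (Ltr n))
    simp at this ⊢
    omega
  rw [Finset.card_univ] at hcard
  have : Fintype.card (Ltr n) = 2 * n := by
    simp [Fintype.card_prod]
    ring
  omega

theorem countMain (hn : 2 ≤ n) (N : Subgroup (FreeGroup (Fin n))) [hNn : N.Normal]
    (hN : N ≠ ⊥) :
    ∃ L J : ℕ, 1 ≤ L ∧ J = (2 * n - 1) ^ (L + 4) ∧ ∀ s : ℕ, 1 ≤ s → ∃ m σ : ℕ,
      m = 8 * s + 2 * σ + s * L ∧ σ ≤ s * (J - 1) ∧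
      J ^ s / (s * J) * (2 * n - 1) ^ (s + σ)
        ≤ Nat.card {g : FreeGroup (Fin n) // g ∈ N ∧ FreeGroup.norm g ≤ m} := by
  classical
  -- extract a nontrivial element
  have hex : ∃ w : FreeGroup (Fin n), w ∈ N ∧ w ≠ 1 := by
    by_contra h
    push_neg at h
    exact hN ((Subgroup.eq_bot_iff_forall N).mpr (fun x hx => h x hx))
  obtain ⟨w, hwN, hw1⟩ := hex
  set l : List (Ltr n) := FreeGroup.toWord w with hldef
  have hlne : l ≠ [] := fun hh => hw1 (FreeGroup.toWord_eq_nil_iff.mp hh)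
  set L : ℕ := l.length with hLdef
  have hL1 : 1 ≤ L := by
    rw [hLdef]
    exact List.length_pos_iff.mpr hlne
  have hredl : RedW l := redW_toWord w
  set a : Ltr n := l.head hlne with hadef
  set b : Ltr n := l.getLast hlne with hbdef
  have hla : l.head? = some a := List.head?_eq_head hlne
  have hlb : l.getLast? = some b := List.getLast?_eq_getLast hlne
  obtain ⟨e, hea, heb, -⟩ := exists_ltr_notin hn a (invL b) (invL b)
  obtain ⟨p₃, hp3a, hp3b, hp3e⟩ := exists_ltr_notin hn (invL a) b (invL e)
  set Q : ℕ := 2 * n - 1 with hQdef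
  have hQ1 : Q + 1 = 2 * n := by omega
  have hQ3 : 3 ≤ Q := by omega
  have hcard : Fintype.card (Ltr n) = Q + 1 := by
    rw [hQ1]
    simp [Fintype.card_prod]
    ring
  let ι : Ltr n ≃ Fin (Q + 1) := Fintype.equivFinOfCardEq hcard
  set J : ℕ := Q ^ (L + 4) with hJdef
  have hJ1 : 1 ≤ J := Nat.one_le_pow _ _ (by omega)
  refine ⟨L, J, hL1, rfl, ?_⟩
  intro s hs1
  -- pigeonhole for σ
  set cnt : ℕ := J ^ s / (s * J) with hcnt
  have hpig : ∃ σ ∈ Finset.range (s * (J - 1) + 1),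
      cnt ≤ (Finset.univ.filter
        (fun g : Fin s → Fin J => (∑ i, ((g i : ℕ))) = σ)).card := by
    apply Finset.exists_le_card_fiber_of_mul_le_card_of_maps_to
    · intro g _
      rw [Finset.mem_range]
      have : (∑ i, ((g i : ℕ))) ≤ ∑ _i : Fin s, (J - 1) := by
        apply Finset.sum_le_sum
        intro i _
        have := (g i).isLt
        omega
      simp only [Finset.sum_const, Finset.card_univ, Fintype.card_fin, smul_eq_mul] at this
      omega
    · exact ⟨0, Finset.mem_range.mpr (by omega)⟩
    · rw [Finset.card_range, Finset.card_univ, Fintype.card_fun]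
      simp only [Fintype.card_fin]
      calc (s * (J - 1) + 1) * cnt ≤ (s * J) * cnt := by
            apply Nat.mul_le_mul_right
            have : 1 ≤ s * 1 := by omega
            calc s * (J - 1) + 1 ≤ s * (J - 1) + s * 1 := by omega
              _ = s * J := by rw [← Nat.mul_add]; congr 1; omega
        _ ≤ J ^ s := by
            rw [hcnt, mul_comm]
            exact Nat.div_mul_le_self _ _
  obtain ⟨σ, hσmem, hσcard⟩ := hpig
  have hσle : σ ≤ s * (J - 1) := by
    exact Nat.lt_succ_iff.mp (Finset.mem_range.mp hσmem)
  set m : ℕ := 8 * s + 2 * σ + s * L with hmdef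
  refine ⟨m, σ, rfl, hσle, ?_⟩
  -- the data type
  let Jfun := {f : Fin s → Fin J // ∑ i, ((f i : ℕ)) = σ}
  let Dtype := Σ f : Jfun, ∀ i : Fin s, Fin (1 + ((f.val i : ℕ))) → Fin Q
  let zl : Dtype → Fin s → List (Fin Q) := fun d i => List.ofFn (d.2 i)
  let usf : Dtype → List (List (Ltr n)) := fun d => List.ofFn (fun i => seg ι a e p₃ (zl d i))
  have hgs : ∀ d : Dtype, ∀ u ∈ usf d, GoodSeg e p₃ u := by
    intro d u hu
    rw [List.mem_ofFn] at hu
    obtain ⟨i, rfl⟩ := hu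
    exact ⟨seg_redw ι a e p₃ hea hp3a hp3e _, seg_head? ι a e p₃ _, seg_getLast? ι a e p₃ _⟩
  have hword_red : ∀ d : Dtype, RedW (blockL l (usf d)) := fun d =>
    blockL_redw a b e p₃ l hredl hla hlb heb hp3a hp3b hp3e _ (hgs d)
  have hzlen : ∀ (d : Dtype) (i : Fin s), (zl d i).length = 1 + ((d.1.val i : ℕ)) := by
    intro d i
    simp [zl]
  have hlenm : ∀ d : Dtype, (blockL l (usf d)).length = m := by
    intro d
    rw [blockL_length]
    have h1 : (usf d).map List.length = List.ofFn (fun i => (zl d i).length + 3) := by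
      show (List.ofFn _).map _ = _
      rw [List.map_ofFn]
      congr 1
      funext i
      exact seg_length ι a e p₃ (zl d i)
    rw [h1, List.sum_ofFn]
    have h2 : ∑ i : Fin s, ((zl d i).length + 3) = 4 * s + σ := by
      have h3 : ∀ i : Fin s, (zl d i).length + 3 = ((d.1.val i : ℕ)) + 4 := by
        intro i; rw [hzlen d i]; ring
      rw [Finset.sum_congr rfl (fun i _ => h3 i), Finset.sum_add_distrib, d.1.property]
      simp [Finset.sum_const, Finset.card_univ]
      ring
    have h4 : (usf d).length = s := by simp [usf]
    rw [h2, h4, hmdef]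
    ring
  have hmemN : ∀ d : Dtype, FreeGroup.mk (blockL l (usf d)) ∈ N := by
    intro d
    apply blockL_mem l N
    rw [hldef, FreeGroup.mk_toWord]
    exact hwN
  let E : Dtype → {g : FreeGroup (Fin n) // g ∈ N ∧ FreeGroup.norm g ≤ m} := fun d =>
    ⟨FreeGroup.mk (blockL l (usf d)), hmemN d, le_of_eq (by rw [(hword_red d).norm_mk, hlenm d])⟩
  have hE : Function.Injective E := by
    intro d d' h
    have hW : blockL l (usf d) = blockL l (usf d') := by
      have h0 : FreeGroup.mk (blockL l (usf d)) = FreeGroup.mk (blockL l (usf d')) :=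
        congrArg Subtype.val h
      have h1 := congrArg FreeGroup.toWord h0
      rwa [(hword_red d).toWord_mk, (hword_red d').toWord_mk] at h1
    rw [blockL_eq, blockL_eq] at hW
    have hsuflen : (FreeGroup.invRev (usf d).flatten).length
        = (FreeGroup.invRev (usf d').flatten).length := by
      have hfl : ∀ dd : Dtype, (usf dd).flatten.length = 4 * s + σ := by
        intro dd
        rw [List.length_flatten]
        show ((List.ofFn _).map _).sum = _
        rw [List.map_ofFn, List.sum_ofFn]
        have h3 : ∀ i : Fin s, (seg ι a e p₃ (zl dd i)).length = ((dd.1.val i : ℕ)) + 4 := by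
          intro i
          rw [seg_length, hzlen dd i]
          ring
        simp only [Function.comp]
        rw [Finset.sum_congr rfl (fun i _ => h3 i), Finset.sum_add_distrib, dd.1.property]
        simp [Finset.sum_const, Finset.card_univ]
        ring
      rw [FreeGroup.invRev_length, FreeGroup.invRev_length, hfl d, hfl d']
    obtain ⟨hpre, hsuf⟩ := List.append_inj' hW hsuflen
    have hflat : (usf d).flatten = (usf d').flatten :=
      FreeGroup.invRev_injective hsuf
    have hus : usf d = usf d' := by
      apply parse a e l hea hla
      · simp [usf]
      · intro u hu; exact ((hgs d) u hu).2.1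
      · intro u hu; exact ((hgs d') u hu).2.1
      · exact hflat
      · exact hpre
    -- componentwise
    have hcomp : ∀ i : Fin s, seg ι a e p₃ (zl d i) = seg ι a e p₃ (zl d' i) := by
      intro i
      have := List.ofFn_inj.mp hus
      exact congrFun this i
    have hj : d.1 = d'.1 := by
      apply Subtype.ext
      funext i
      apply Fin.ext
      have := congrArg List.length (hcomp i)
      rw [seg_length, seg_length, hzlen d i, hzlen d' i] at this
      exact Nat.add_left_cancel (Nat.add_right_cancel this)
    -- now the z data
    obtain ⟨f, zf⟩ := d
    obtain ⟨f', zf'⟩ := d'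
    have hff : f = f' := hj
    subst hff
    apply congrArg (Sigma.mk f)
    funext i
    have hz : zl ⟨f, zf⟩ i = zl ⟨f, zf'⟩ i := seg_injective ι a e p₃ (hcomp i)
    exact List.ofFn_inj.mp hz
  -- cardinality chain
  have hcardD : Fintype.card Dtype = Fintype.card Jfun * Q ^ (s + σ) := by
    rw [Fintype.card_sigma]
    have h1 : ∀ f : Jfun, Fintype.card (∀ i : Fin s, Fin (1 + ((f.val i : ℕ))) → Fin Q)
        = Q ^ (s + σ) := by
      intro f
      rw [Fintype.card_pi]
      have h2 : ∀ i : Fin s, Fintype.card (Fin (1 + ((f.val i : ℕ))) → Fin Q)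
          = Q ^ (1 + ((f.val i : ℕ))) := by
        intro i
        rw [Fintype.card_fun]
        simp
      rw [Finset.prod_congr rfl (fun i _ => h2 i), Finset.prod_pow_eq_pow_sum]
      congr 1
      rw [Finset.sum_add_distrib, f.property]
      simp [Finset.sum_const, Finset.card_univ]
    rw [Finset.sum_congr rfl (fun f _ => h1 f)]
    simp [Finset.sum_const, Finset.card_univ]
  have hJfun : cnt ≤ Fintype.card Jfun := by
    rw [Fintype.card_subtype]
    exact hσcard
  calc J ^ s / (s * J) * Q ^ (s + σ) = cnt * Q ^ (s + σ) := by rw [hcnt]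
    _ ≤ Fintype.card Jfun * Q ^ (s + σ) := Nat.mul_le_mul_right _ hJfun
    _ = Fintype.card Dtype := hcardD.symm
    _ = Nat.card Dtype := (Nat.card_eq_fintype_card).symm
    _ ≤ Nat.card {g : FreeGroup (Fin n) // g ∈ N ∧ FreeGroup.norm g ≤ m} :=
        Nat.card_le_card_of_injective E hE

set_option maxHeartbeats 2000000 in
theorem finalMain (hn : 2 ≤ n) (N : Subgroup (FreeGroup (Fin n))) [hNn : N.Normal]
    (hN : N ≠ ⊥) :
    Real.log (2 * (n : ℝ) - 1) / 2 <
      Filter.limsup (fun R : ℕ =>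
        Real.log (Nat.card {g : FreeGroup (Fin n) // g ∈ N ∧ FreeGroup.norm g ≤ R}) / R)
        Filter.atTop := by
  classical
  obtain ⟨L, J, hL1, hJdef, hmain⟩ := countMain hn N hN
  set f : ℕ → ℝ := fun R =>
    Real.log (Nat.card {g : FreeGroup (Fin n) // g ∈ N ∧ FreeGroup.norm g ≤ R}) / R with hfdef
  set Q : ℕ := 2 * n - 1 with hQdef
  have hQ3 : 3 ≤ Q := by omega
  have hQr : ((Q : ℝ)) = 2 * (n : ℝ) - 1 := by
    rw [hQdef]
    push_cast [Nat.cast_sub (by omega : 1 ≤ 2 * n)]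
    ring
  have hJ1 : 1 ≤ J := by
    rw [hJdef]
    exact Nat.one_le_pow _ _ (by omega)
  set V : ℕ := 8 + 2 * J + L with hVdef
  have hV1 : 1 ≤ V := by omega
  set ε : ℝ := 1 / (4 * V) with hεdef
  have hVpos : (0:ℝ) < (V:ℝ) := by
    have : (1:ℝ) ≤ (V:ℝ) := by exact_mod_cast hV1
    linarith
  have hε : 0 < ε := by
    rw [hεdef]
    positivity
  have hlogQ : 1 ≤ Real.log Q := by
    rw [Real.le_log_iff_exp_le (by positivity : (0:ℝ) < (Q:ℝ))]
    have h1 : Real.exp 1 < 2.7182818286 := Real.exp_one_lt_d9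
    have h2 : (2.7182818286 : ℝ) ≤ 3 := by norm_num
    have h3 : (3:ℝ) ≤ (Q:ℝ) := by exact_mod_cast hQ3
    linarith
  set c₀ : ℝ := Real.log Q / 2 + ε with hc₀def
  -- the frequent lower bound
  have hfreq : ∀ R₀ : ℕ, ∃ R ≥ R₀, c₀ ≤ f R := by
    intro R₀
    set s : ℕ := max 2 (max (4 * (L + 4)) R₀) with hsdef
    have hs2 : 2 ≤ s := le_max_left _ _
    have hs4 : 4 * (L + 4) ≤ s := le_trans (le_max_left _ _) (le_max_right _ _)
    have hsR : R₀ ≤ s := le_trans (le_max_right _ _) (le_max_right _ _)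
    obtain ⟨m, σ, hm, hσ, hcard⟩ := hmain s (by omega)
    have hm8 : 8 * s ≤ m := by
      rw [hm]
      exact le_trans (Nat.le_add_right _ _) (Nat.le_add_right _ _)
    refine ⟨m, by omega, ?_⟩
    -- nat chain: Q ^ (A₀ + (s + σ)) ≤ card
    have h2s : s ≤ Q ^ s := by
      calc s ≤ 2 ^ s := Nat.le_of_lt (Nat.lt_two_pow_self)
        _ ≤ Q ^ s := Nat.pow_le_pow_left (by omega) s
    have hsJ : s * J ≤ Q ^ (s + (L + 4)) := by
      calc s * J ≤ Q ^ s * J := Nat.mul_le_mul_right _ h2s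
        _ = Q ^ (s + (L + 4)) := by rw [hJdef, ← pow_add]
    have hexp : s + (L + 4) ≤ (L + 4) * s := by
      have h1 : (L + 3) * 2 ≤ (L + 3) * s := Nat.mul_le_mul_left _ hs2
      have h2 : (L + 4) * s = (L + 3) * s + s := by ring
      omega
    have hsJpos : 0 < s * J := by positivity
    have hdiv1 : J ^ s / (Q ^ (s + (L + 4))) ≤ J ^ s / (s * J) :=
      Nat.div_le_div_left hsJ hsJpos
    have hJs : J ^ s = Q ^ ((L + 4) * s) := by rw [hJdef, ← pow_mul]
    set A₀ : ℕ := (L + 4) * s - (s + (L + 4)) with hA₀def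
    have hdiv2 : Q ^ A₀ ≤ J ^ s / (s * J) := by
      rw [hA₀def, ← Nat.pow_div hexp (by omega), ← hJs]
      exact hdiv1
    have hnat : Q ^ (A₀ + (s + σ)) ≤
        Nat.card {g : FreeGroup (Fin n) // g ∈ N ∧ FreeGroup.norm g ≤ m} := by
      calc Q ^ (A₀ + (s + σ)) = Q ^ A₀ * Q ^ (s + σ) := pow_add _ _ _
        _ ≤ J ^ s / (s * J) * Q ^ (s + σ) := Nat.mul_le_mul_right _ hdiv2
        _ ≤ _ := hcard
    -- real log bound
    have hcast : ((Q : ℝ)) ^ (A₀ + (s + σ)) ≤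
        ((Nat.card {g : FreeGroup (Fin n) // g ∈ N ∧ FreeGroup.norm g ≤ m} : ℕ) : ℝ) := by
      exact_mod_cast hnat
    have hlog : ((A₀ + (s + σ) : ℕ) : ℝ) * Real.log Q ≤
        Real.log (Nat.card {g : FreeGroup (Fin n) // g ∈ N ∧ FreeGroup.norm g ≤ m}) := by
      rw [← Real.log_pow]
      apply Real.log_le_log (by positivity)
      exact hcast
    -- arithmetic
    have hA₀cast : ((A₀ : ℕ) : ℝ) = (L + 4) * (s:ℝ) - ((s:ℝ) + (L + 4)) := by
      rw [hA₀def, Nat.cast_sub hexp]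
      push_cast
      ring
    have hmcast : ((m : ℕ) : ℝ) = 8 * (s:ℝ) + 2 * (σ:ℝ) + (s:ℝ) * (L:ℝ) := by
      rw [hm]; push_cast; ring
    have hσr : (σ:ℝ) ≤ (s:ℝ) * ((J:ℝ) - 1) := by
      have h1 : (σ:ℝ) ≤ ((s * (J-1) : ℕ) : ℝ) := by exact_mod_cast hσ
      rw [Nat.cast_mul, Nat.cast_sub hJ1] at h1
      simpa using h1
    have hmV : ((m : ℕ) : ℝ) ≤ (s:ℝ) * (V:ℝ) := by
      rw [hmcast, hVdef]
      push_cast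
      nlinarith [hσr, (Nat.cast_nonneg s : (0:ℝ) ≤ (s:ℝ)), (Nat.cast_nonneg σ : (0:ℝ) ≤ (σ:ℝ)),
        (Nat.cast_nonneg L : (0:ℝ) ≤ (L:ℝ))]
    have hεm : ε * ((m : ℕ) : ℝ) ≤ (s:ℝ) / 4 := by
      rw [hεdef]
      have hmnn : (0:ℝ) ≤ ((m : ℕ) : ℝ) := Nat.cast_nonneg m
      calc 1 / (4 * (V:ℝ)) * ((m : ℕ) : ℝ) ≤ 1 / (4 * (V:ℝ)) * ((s:ℝ) * (V:ℝ)) := by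
            apply mul_le_mul_of_nonneg_left hmV
            positivity
        _ = (s:ℝ) / 4 := by field_simp
    have hXm : ((A₀ + (s + σ) : ℕ) : ℝ) - ((m : ℕ) : ℝ) / 2 ≥ (s:ℝ) / 4 := by
      push_cast [hA₀cast, hmcast]
      have hL1r : (1:ℝ) ≤ (L:ℝ) := by exact_mod_cast hL1
      have hs4r : 4 * ((L:ℝ) + 4) ≤ (s:ℝ) := by exact_mod_cast hs4
      nlinarith [(Nat.cast_nonneg s : (0:ℝ) ≤ (s:ℝ))]
    have hckey : c₀ * ((m : ℕ) : ℝ) ≤ ((A₀ + (s + σ) : ℕ) : ℝ) * Real.log Q := by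
      rw [hc₀def]
      have hsnn : (0:ℝ) ≤ (s:ℝ) := Nat.cast_nonneg s
      have h1 : (0:ℝ) ≤ ((A₀ + (s + σ) : ℕ) : ℝ) - ((m : ℕ) : ℝ) / 2 := by
        have : (0:ℝ) ≤ (s:ℝ)/4 := by linarith
        linarith [hXm]
      have h2 : (s:ℝ)/4 * 1 ≤ (((A₀ + (s + σ) : ℕ) : ℝ) - ((m : ℕ) : ℝ) / 2) * Real.log Q :=
        mul_le_mul hXm hlogQ (by norm_num) h1
      have h3 : (((A₀ + (s + σ) : ℕ) : ℝ) - ((m : ℕ) : ℝ) / 2) * Real.log Q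
          = ((A₀ + (s + σ) : ℕ) : ℝ) * Real.log Q - Real.log Q / 2 * ((m : ℕ) : ℝ) := by
        ring
      have h4 : (s:ℝ)/4 * 1 = (s:ℝ)/4 := by ring
      linarith [hεm]
    have hmpos : (0:ℝ) < ((m : ℕ) : ℝ) := by
      have hspos : 0 < s := lt_of_lt_of_le (by norm_num) hs2
      have h16 : 0 < m := Nat.lt_of_lt_of_le (Nat.mul_pos (by norm_num) hspos) hm8
      exact_mod_cast h16
    rw [hfdef]
    show c₀ ≤ Real.log (Nat.card {g : FreeGroup (Fin n) // g ∈ N ∧ FreeGroup.norm g ≤ m}) / m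
    rw [le_div_iff₀ hmpos]
    exact le_trans hckey hlog
  -- boundedness
  have hbdd : Filter.IsBoundedUnder (· ≤ ·) Filter.atTop f := by
    apply Filter.isBoundedUnder_of
    refine ⟨2 * Real.log (2 * n + 1), ?_⟩
    intro R
    have hlognn : 0 ≤ Real.log (2 * (n:ℝ) + 1) := Real.log_nonneg (by
      have : (0:ℝ) ≤ (n:ℝ) := Nat.cast_nonneg n
      linarith)
    rcases Nat.eq_zero_or_pos R with hR0 | hRpos
    · rw [hfdef]
      simp [hR0]
      positivity
    · have hcard1 : 1 ≤ Nat.card {g : FreeGroup (Fin n) // g ∈ N ∧ FreeGroup.norm g ≤ R} := by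
        have : Nonempty {g : FreeGroup (Fin n) // g ∈ N ∧ FreeGroup.norm g ≤ R} :=
          ⟨⟨1, one_mem N, by simp [FreeGroup.norm_one]⟩⟩
        exact Nat.card_pos
      have hub := ball_card_le N R
      have hlogub : Real.log (Nat.card {g : FreeGroup (Fin n) // g ∈ N ∧ FreeGroup.norm g ≤ R})
          ≤ ((R + 1 : ℕ) : ℝ) * Real.log (2 * (n:ℝ) + 1) := by
        rw [← Real.log_pow]
        apply Real.log_le_log (by exact_mod_cast hcard1)
        have := hub
        calc ((Nat.card {g : FreeGroup (Fin n) // g ∈ N ∧ FreeGroup.norm g ≤ R} : ℕ) : ℝ)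
            ≤ (((2 * n + 1) ^ (R + 1) : ℕ) : ℝ) := by exact_mod_cast this
          _ = ((2 * (n:ℝ) + 1)) ^ (R + 1) := by push_cast; ring
      rw [hfdef]
      show Real.log (Nat.card {g : FreeGroup (Fin n) // g ∈ N ∧ FreeGroup.norm g ≤ R}) / R
        ≤ 2 * Real.log (2 * n + 1)
      rw [div_le_iff₀ (by exact_mod_cast hRpos : (0:ℝ) < (R:ℝ))]
      have hR1 : (1:ℝ) ≤ (R:ℝ) := by exact_mod_cast hRpos
      have hcastR : ((R + 1 : ℕ) : ℝ) = (R:ℝ) + 1 := by push_cast; ring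
      calc Real.log (Nat.card {g : FreeGroup (Fin n) // g ∈ N ∧ FreeGroup.norm g ≤ R})
          ≤ ((R + 1 : ℕ) : ℝ) * Real.log (2 * (n:ℝ) + 1) := hlogub
        _ = ((R:ℝ) + 1) * Real.log (2 * (n:ℝ) + 1) := by rw [hcastR]
        _ ≤ (2 * R) * Real.log (2 * (n:ℝ) + 1) := by nlinarith
        _ = 2 * Real.log (2 * (n:ℝ) + 1) * R := by ring
  have hle := Filter.le_limsup_of_frequently_le (Filter.frequently_atTop.mpr hfreq) hbdd
  calc Real.log (2 * (n : ℝ) - 1) / 2 = Real.log Q / 2 := by rw [hQr]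
    _ < c₀ := by rw [hc₀def]; linarith
    _ ≤ _ := hle

end CogrowthInfra


namespace JM

/-- The free group of rank `n`. -/
abbrev F (n : ℕ) := FreeGroup (Fin n)

/-- The Poincaré exponent of a subgroup `G` of the free group, with respect to the
word metric of the standard free generating set. -/
def poincareExponent (n : ℕ) (G : Subgroup (F n)) : ℝ :=
  limsup (fun R : ℕ =>
    Real.log (Nat.card {g : F n // g ∈ G ∧ FreeGroup.norm g ≤ R}) / R) atTop

/-- `G` is of divergence type if its Poincaré series diverges at the exponent. -/
def DivergenceType (n : ℕ) (G : Subgroup (F n)) : Prop :=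
  ¬ Summable (fun g : G => Real.exp (-(poincareExponent n G) * FreeGroup.norm (g : F n)))

/-- The vertex set of the quotient graph `Γ_H = T_n/H`: the right cosets `Hg`. -/
abbrev Cosets (n : ℕ) (H : Subgroup (F n)) := Quotient (QuotientGroup.rightRel H)

/-- Right multiplication on right cosets: `Hg ↦ Hga`. -/
def rmul {n : ℕ} {H : Subgroup (F n)} (x : Cosets n H) (a : F n) : Cosets n H :=
  Quotient.liftOn x (fun g => Quotient.mk (QuotientGroup.rightRel H) (g * a))
    (fun b c h => Quotient.sound (by
      have h' := QuotientGroup.rightRel_apply.mp h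
      show (QuotientGroup.rightRel H) _ _
      rw [QuotientGroup.rightRel_apply]
      simpa [mul_assoc] using h'))

/-- Distance from the base vertex `H` to the vertex `Hg` in the quotient graph,
namely `min_{h ∈ H} |hg|`. -/
def cosetDist {n : ℕ} {H : Subgroup (F n)} (x : Cosets n H) : ℕ :=
  sInf (FreeGroup.norm '' {g : F n | Quotient.mk (QuotientGroup.rightRel H) g = x})

/-- The exponential growth rate of the quotient graph `Γ_H = T_n/H`. -/
def graphGrowth (n : ℕ) (H : Subgroup (F n)) : ℝ :=
  limsup (fun R : ℕ =>
    (Nat.card {x : Cosets n H // cosetDist x ≤ R} : ℝ) ^ (1 / (R : ℝ))) atTop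

/-- the generators `S ∪ S⁻¹`, indexed by `Fin n × Bool`. -/
def sgen {n : ℕ} (p : Fin n × Bool) : F n :=
  if p.2 then FreeGroup.of p.1 else (FreeGroup.of p.1)⁻¹

/-- The number of boundary edges of a finite set `A` of vertices of `Γ_H`. -/
def boundaryCard {n : ℕ} {H : Subgroup (F n)} (A : Finset (Cosets n H)) : ℕ :=
  Nat.card {p : Cosets n H × (Fin n × Bool) // p.1 ∈ A ∧ rmul p.1 (sgen p.2) ∉ A}

/-- The isoperimetric constant of the `2n`-regular graph `Γ_H`. -/
def isoConst (n : ℕ) (H : Subgroup (F n)) : ℝ :=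
  sInf {r : ℝ | ∃ A : Finset (Cosets n H), A.Nonempty ∧
    r = (boundaryCard A : ℝ) / (2 * n * A.card)}

/-- The bottom of the spectrum of the discrete Laplacian on `Γ_H`, as the infimum of
Rayleigh quotients of finitely supported nonzero functions. -/
def lambdaZero (n : ℕ) (H : Subgroup (F n)) : ℝ :=
  sInf {r : ℝ | ∃ f : Cosets n H → ℝ, (Function.support f).Finite ∧ f ≠ 0 ∧
    r = (∑ᶠ x, ∑ i : Fin n, (f x - f (rmul x (FreeGroup.of i))) ^ 2) /
        (2 * n * ∑ᶠ x, (f x) ^ 2)}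

/-- The transition operator of the simple random walk on `Γ_H`. -/
def transOp {n : ℕ} {H : Subgroup (F n)} (f : Cosets n H → ℝ) (x : Cosets n H) : ℝ :=
  (1 / (2 * n)) * ∑ p : Fin n × Bool, f (rmul x (sgen p))

/-- The spectral radius of the transition operator `P` of the simple random walk on
`Γ_N`: since `P` is bounded and self-adjoint on `ℓ²`, its spectral radius equals its
operator norm, i.e. the supremum of `‖Pf‖/‖f‖` over finitely supported nonzero `f`. -/
def specRad (n : ℕ) (H : Subgroup (F n)) : ℝ :=
  sSup {r : ℝ | ∃ f : Cosets n H → ℝ, (Function.support f).Finite ∧ f ≠ 0 ∧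
    r = Real.sqrt (∑ᶠ x, (transOp f x) ^ 2) / Real.sqrt (∑ᶠ x, (f x) ^ 2)}


/-- For every non-trivial normal subgroup `N ⊴ F_n` (`n ≥ 2`) one has
`δ(N) > (1/2)·log(2n−1)`, i.e. the cogrowth `δ(N)/log(2n−1)` is `> 1/2`. -/
theorem stmt2 (n : ℕ) (hn : 2 ≤ n) (N : Subgroup (F n)) [N.Normal] (hN : N ≠ ⊥) :
    poincareExponent n N > Real.log (2 * n - 1) / 2 := by
  unfold poincareExponent
  exact finalMain hn N hN

end JM
end
end

section
/- (Cheeger-type inequality of Mohar) Let n ≥ 2 and let H be a subgroup of the free group F_n. Then the isoperimetric constant and the bottom of the spectrum of the discrete Laplacian of the quotient graph Γ_H = T_n/H satisfy i(Γ_H) ≤ √(1 − (1 − λ₀(Γ_H))²). -/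
open Filter Real

noncomputable section

namespace JM

section Aux
variable {n : ℕ} {H : Subgroup (F n)}

lemma rmul_rmul (x : Cosets n H) (a b : F n) : rmul (rmul x a) b = rmul x (a * b) := by
  induction x using Quotient.inductionOn with
  | h g => show Quotient.mk _ (g * a * b) = Quotient.mk _ (g * (a * b)); rw [mul_assoc]

lemma rmul_one (x : Cosets n H) : rmul x 1 = x := by
  induction x using Quotient.inductionOn with
  | h g => show Quotient.mk _ (g * 1) = _; rw [mul_one]

def rmulEquiv (a : F n) : Cosets n H ≃ Cosets n H where
  toFun x := rmul x a
  invFun x := rmul x a⁻¹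
  left_inv x := by simp [rmul_rmul, rmul_one]
  right_inv x := by simp [rmul_rmul, rmul_one]

lemma finsum_rmul (F' : Cosets n H → ℝ) (a : F n) : ∑ᶠ x, F' (rmul x a) = ∑ᶠ x, F' x :=
  finsum_comp_equiv (rmulEquiv a)

lemma sgen_inv (p : Fin n × Bool) : sgen (p.1, !p.2) = (sgen p)⁻¹ := by
  rcases p with ⟨i, b⟩; cases b <;> simp [sgen]

def pbar {n : ℕ} (p : Fin n × Bool) : Fin n × Bool := (p.1, !p.2)

def pbarEquiv (n : ℕ) : (Fin n × Bool) ≃ (Fin n × Bool) where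
  toFun := pbar
  invFun := pbar
  left_inv p := by rcases p with ⟨i,b⟩; cases b <;> simp [pbar]
  right_inv p := by rcases p with ⟨i,b⟩; cases b <;> simp [pbar]

lemma rmul_sgen_pbar (x : Cosets n H) (p : Fin n × Bool) :
    rmul (rmul x (sgen p)) (sgen (pbar p)) = x := by
  rw [rmul_rmul]; rw [show sgen (pbar p) = (sgen p)⁻¹ from sgen_inv p]
  simp [rmul_one]

lemma pbar_pbar (p : Fin n × Bool) : pbar (pbar p) = p := by
  rcases p with ⟨i, b⟩; cases b <;> rfl

open Classical in
lemma boundaryCard_eq (A : Finset (Cosets n H)) :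
    boundaryCard A =
      ((A ×ˢ (Finset.univ : Finset (Fin n × Bool))).filter
        (fun q => rmul q.1 (sgen q.2) ∉ A)).card := by
  rw [boundaryCard, ← Fintype.card_coe, ← Nat.card_eq_fintype_card]
  apply Nat.card_congr
  apply Equiv.subtypeEquivRight
  intro q
  simp only [Finset.mem_filter, Finset.mem_product, Finset.mem_univ, and_true]

open Classical in
def ball (A : Finset (Cosets n H)) : Finset (Cosets n H) :=
  A ∪ A.biUnion (fun x => Finset.image (fun p : Fin n × Bool => rmul x (sgen p)) Finset.univ)

lemma subset_ball (A : Finset (Cosets n H)) : A ⊆ ball A := by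
  classical exact Finset.subset_union_left

lemma mem_ball_of_rmul {A : Finset (Cosets n H)} {x : Cosets n H} {p : Fin n × Bool}
    (h : rmul x (sgen p) ∈ A) : x ∈ ball A := by
  classical
  apply Finset.mem_union_right
  rw [Finset.mem_biUnion]
  refine ⟨rmul x (sgen p), h, ?_⟩
  rw [Finset.mem_image]
  exact ⟨pbar p, Finset.mem_univ _, rmul_sgen_pbar x p⟩

open Classical in
lemma outSupport (A : Finset (Cosets n H)) :
    (Function.support fun x =>
      ∑ p : Fin n × Bool, if x ∈ A ∧ rmul x (sgen p) ∉ A then (1:ℝ) else 0) ⊆ ↑A := by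
  intro x hx
  simp only [Function.mem_support] at hx
  by_contra hxA
  apply hx
  apply Finset.sum_eq_zero
  intro p _
  exact if_neg (by tauto)

open Classical in
lemma outSum (A : Finset (Cosets n H)) :
    ∑ᶠ x, (∑ p : Fin n × Bool, if x ∈ A ∧ rmul x (sgen p) ∉ A then (1:ℝ) else 0)
      = boundaryCard A := by
  rw [finsum_eq_finset_sum_of_support_subset _ (outSupport A)]
  have h1 : ∀ x ∈ A, (∑ p : Fin n × Bool, if x ∈ A ∧ rmul x (sgen p) ∉ A then (1:ℝ) else 0)
      = ∑ p : Fin n × Bool, if rmul x (sgen p) ∉ A then (1:ℝ) else 0 := by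
    intro x hx
    apply Finset.sum_congr rfl
    intro p _
    by_cases h : rmul x (sgen p) ∉ A
    · rw [if_pos ⟨hx, h⟩, if_pos h]
    · rw [if_neg (by tauto), if_neg h]
  rw [Finset.sum_congr rfl h1]
  rw [← Finset.sum_product' (f := fun x p => if rmul x (sgen p) ∉ A then (1:ℝ) else 0)]
  rw [Finset.sum_boole]
  rw [boundaryCard_eq]

open Classical in
lemma incSum (A : Finset (Cosets n H)) :
    ∑ᶠ x, (∑ p : Fin n × Bool, if x ∉ A ∧ rmul x (sgen p) ∈ A then (1:ℝ) else 0)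
      = boundaryCard A := by
  have hsupp : ∀ p : Fin n × Bool,
      (Function.support fun x => if x ∉ A ∧ rmul x (sgen p) ∈ A then (1:ℝ) else 0) ⊆ ball A := by
    intro p x hx
    simp only [Function.mem_support] at hx
    by_cases h : rmul x (sgen p) ∈ A
    · exact mem_ball_of_rmul h
    · exact absurd (if_neg (by tauto)) hx
  have hsupp2 : (Function.support fun x =>
      ∑ p : Fin n × Bool, if x ∉ A ∧ rmul x (sgen p) ∈ A then (1:ℝ) else 0) ⊆ ball A := by
    intro x hx
    simp only [Function.mem_support] at hx
    by_contra hxB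
    apply hx
    apply Finset.sum_eq_zero
    intro p _
    exact if_neg (fun hc => hxB (mem_ball_of_rmul hc.2))
  rw [finsum_eq_finset_sum_of_support_subset _ hsupp2]
  rw [Finset.sum_comm]
  have h2 : ∀ p : Fin n × Bool,
      (∑ x ∈ ball A, if x ∉ A ∧ rmul x (sgen p) ∈ A then (1:ℝ) else 0)
      = ∑ᶠ x, (if x ∉ A ∧ rmul x (sgen p) ∈ A then (1:ℝ) else 0) :=
    fun p => (finsum_eq_finset_sum_of_support_subset _ (hsupp p)).symm
  rw [Finset.sum_congr rfl (fun p _ => h2 p)]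
  have h3 : ∀ p : Fin n × Bool,
      (∑ᶠ x, (if x ∉ A ∧ rmul x (sgen p) ∈ A then (1:ℝ) else 0))
      = ∑ᶠ x, (if x ∈ A ∧ rmul x (sgen (pbar p)) ∉ A then (1:ℝ) else 0) := by
    intro p
    rw [← finsum_rmul (fun x => if x ∉ A ∧ rmul x (sgen p) ∈ A then (1:ℝ) else 0)
      (sgen (pbar p))]
    apply finsum_congr
    intro x
    have hxx : rmul (rmul x (sgen (pbar p))) (sgen p) = x := by
      have := rmul_sgen_pbar x (pbar p); rwa [pbar_pbar] at this
    rw [hxx]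
    exact if_congr ⟨fun h => ⟨h.2, h.1⟩, fun h => ⟨h.2, h.1⟩⟩ rfl rfl
  rw [Finset.sum_congr rfl (fun p _ => h3 p)]
  have h4 : (∑ p : Fin n × Bool,
        ∑ᶠ x, (if x ∈ A ∧ rmul x (sgen (pbar p)) ∉ A then (1:ℝ) else 0))
      = ∑ p : Fin n × Bool, ∑ᶠ x, (if x ∈ A ∧ rmul x (sgen p) ∉ A then (1:ℝ) else 0) :=
    Fintype.sum_equiv (pbarEquiv n)
      (fun p => ∑ᶠ x, (if x ∈ A ∧ rmul x (sgen (pbar p)) ∉ A then (1:ℝ) else 0))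
      (fun p => ∑ᶠ x, (if x ∈ A ∧ rmul x (sgen p) ∉ A then (1:ℝ) else 0))
      (fun p => by rw [show (pbarEquiv n) p = pbar p from rfl])
  rw [h4]
  have h5 : ∀ p : Fin n × Bool,
      (∑ᶠ x, (if x ∈ A ∧ rmul x (sgen p) ∉ A then (1:ℝ) else 0))
      = ∑ x ∈ A, (if x ∈ A ∧ rmul x (sgen p) ∉ A then (1:ℝ) else 0) := by
    intro p
    apply finsum_eq_finset_sum_of_support_subset
    intro x hx
    simp only [Function.mem_support] at hx
    by_contra hxA
    exact hx (if_neg (by tauto))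
  rw [Finset.sum_congr rfl (fun p _ => h5 p), Finset.sum_comm]
  rw [← finsum_eq_finset_sum_of_support_subset _ (outSupport A)]
  exact outSum A

open Classical in
lemma ball_mono {A B : Finset (Cosets n H)} (h : A ⊆ B) : ball A ⊆ ball B := by
  intro x hx
  rw [ball, Finset.mem_union] at hx
  rw [ball, Finset.mem_union]
  rcases hx with hx | hx
  · exact Or.inl (h hx)
  · right
    rw [Finset.mem_biUnion] at hx ⊢
    obtain ⟨a, ha, hxa⟩ := hx
    exact ⟨a, h ha, hxa⟩
open Classical in
lemma incSupport (A : Finset (Cosets n H)) :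
    (Function.support fun x =>
      ∑ p : Fin n × Bool, if x ∉ A ∧ rmul x (sgen p) ∈ A then (1:ℝ) else 0) ⊆ ↑(ball A) := by
  intro x hx
  simp only [Function.mem_support] at hx
  by_contra hxB
  apply hx
  apply Finset.sum_eq_zero
  intro p _
  exact if_neg (fun hc => hxB (mem_ball_of_rmul hc.2))

open Classical in
lemma Lx_support {g : Cosets n H → ℝ} {T : Finset (Cosets n H)}
    (h : Function.support g ⊆ ↑T) :
    (Function.support fun x => ∑ p : Fin n × Bool, |g x - g (rmul x (sgen p))|)
      ⊆ ↑(ball T) := by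
  intro x hx
  simp only [Function.mem_support] at hx
  by_contra hxB
  apply hx
  apply Finset.sum_eq_zero
  intro p _
  have h1 : g x = 0 := by
    by_contra h0
    exact hxB (Finset.mem_coe.mpr (subset_ball T (Finset.mem_coe.mp (h h0))))
  have h2 : g (rmul x (sgen p)) = 0 := by
    by_contra h0
    exact hxB (Finset.mem_coe.mpr (mem_ball_of_rmul (Finset.mem_coe.mp (h h0))))
  rw [h1, h2, sub_zero, abs_zero]

lemma ptwise {a b v v' : ℝ} (hv' : 0 ≤ v') (hv : v' < v) (ha : a = v ∨ a ≤ v')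
    (hb : b = v ∨ b ≤ v') (P Q : Prop) [Decidable P] [Decidable Q]
    (hP : P ↔ v ≤ a) (hQ : Q ↔ v ≤ b) :
    |a - b| = |min a v' - min b v'| +
      (v - v') * ((if P ∧ ¬Q then (1:ℝ) else 0) + (if ¬P ∧ Q then (1:ℝ) else 0)) := by
  rcases ha with rfl | ha <;> rcases hb with rfl | hb
  · have hp : P := hP.mpr le_rfl
    have hq : Q := hQ.mpr le_rfl
    simp [hp, hq]
  · have hp : P := hP.mpr le_rfl
    have hq : ¬Q := fun h => absurd (hQ.mp h) (by intro h2; linarith)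
    rw [min_eq_right hv.le, min_eq_left hb, if_pos ⟨hp, hq⟩, if_neg (fun h => h.1 hp),
      abs_of_nonneg (by linarith), abs_of_nonneg (by linarith)]
    ring
  · have hq : Q := hQ.mpr le_rfl
    have hp : ¬P := fun h => absurd (hP.mp h) (by intro h2; linarith)
    rw [min_eq_left ha, min_eq_right hv.le, if_neg (fun h => hp h.1), if_pos ⟨hp, hq⟩,
      abs_of_nonpos (by linarith), abs_of_nonpos (by linarith)]
    ring
  · have hp : ¬P := fun h => absurd (hP.mp h) (by intro h2; linarith)
    have hq : ¬Q := fun h => absurd (hQ.mp h) (by intro h2; linarith)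
    rw [min_eq_left ha, min_eq_left hb, if_neg (fun h => hp h.1), if_neg (fun h => hq h.2)]
    simp

open Classical in
lemma key_aux : ∀ (k : ℕ) (g : Cosets n H → ℝ) (hfin : (Function.support g).Finite),
    (∀ x, 0 ≤ g x) → g ≠ 0 → (hfin.toFinset.image g).card ≤ k →
    ∃ A : Finset (Cosets n H), A.Nonempty ∧
      2 * (boundaryCard A : ℝ) * (∑ᶠ x, g x) ≤
        (∑ᶠ x, ∑ p : Fin n × Bool, |g x - g (rmul x (sgen p))|) * A.card := by
  intro k
  induction k with
  | zero =>
    intro g hfin hnn hne hcard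
    exfalso
    obtain ⟨x₀, hx₀⟩ := Function.ne_iff.mp hne
    have hx₀T : x₀ ∈ hfin.toFinset := hfin.mem_toFinset.mpr hx₀
    have : g x₀ ∈ hfin.toFinset.image g := Finset.mem_image_of_mem g hx₀T
    have := Finset.card_pos.mpr ⟨g x₀, this⟩
    omega
  | succ k ih =>
    intro g hfin hnn hne hk
    set T := hfin.toFinset with hTdef
    have hsuppT : Function.support g ⊆ ↑T := by rw [hTdef, Set.Finite.coe_toFinset]
    obtain ⟨x₀, hx₀⟩ := Function.ne_iff.mp hne
    have hx₀T : x₀ ∈ T := hfin.mem_toFinset.mpr hx₀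
    have hTne : T.Nonempty := ⟨x₀, hx₀T⟩
    set v := (T.image g).max' (hTne.image g) with hvdef
    have hvmem : v ∈ T.image g := Finset.max'_mem _ _
    obtain ⟨xv, hxvT, hgxv⟩ := Finset.mem_image.mp hvmem
    have hvpos : 0 < v := by
      have h1 : g x₀ ≤ v := Finset.le_max' _ _ (Finset.mem_image_of_mem g hx₀T)
      have h2 : 0 < g x₀ := lt_of_le_of_ne (hnn x₀) (Ne.symm hx₀)
      linarith
    have hle : ∀ x, g x ≤ v := by
      intro x
      by_cases hx : x ∈ T
      · exact Finset.le_max' _ _ (Finset.mem_image_of_mem g hx)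
      · have : g x = 0 := by
          by_contra h0
          exact hx (hfin.mem_toFinset.mpr h0)
        rw [this]; exact hvpos.le
    set B := T.filter (fun x => g x ≠ v) with hBdef
    set v' := (if hB : B.Nonempty then (B.image g).max' (hB.image g) else 0) with hv'def
    have hv'0 : 0 ≤ v' := by
      rw [hv'def]
      split_ifs with hB
      · obtain ⟨xb, hxb, hgb⟩ := Finset.mem_image.mp (Finset.max'_mem (B.image g) (hB.image g))
        rw [← hgb]; exact hnn xb
      · exact le_rfl
    have hx₀' : g x₀ ≠ 0 := by simpa using hx₀
    have hv'v : v' < v := by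
      rw [hv'def]
      split_ifs with hB
      · obtain ⟨xb, hxb, hgb⟩ := Finset.mem_image.mp (Finset.max'_mem (B.image g) (hB.image g))
        have := (Finset.mem_filter.mp hxb).2
        have := hle xb
        rw [← hgb]
        exact lt_of_le_of_ne (hle xb) (Finset.mem_filter.mp hxb).2
      · exact hvpos
    have hsplit : ∀ x, g x = v ∨ g x ≤ v' := by
      intro x
      by_cases hgx : g x = v
      · exact Or.inl hgx
      · right
        by_cases hxT : x ∈ T
        · have hxB : x ∈ B := Finset.mem_filter.mpr ⟨hxT, hgx⟩
          have hBne : B.Nonempty := ⟨x, hxB⟩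
          rw [hv'def, dif_pos hBne]
          exact Finset.le_max' _ _ (Finset.mem_image_of_mem g hxB)
        · have : g x = 0 := by
            by_contra h0
            exact hxT (hfin.mem_toFinset.mpr h0)
          rw [this]; exact hv'0
    set A := T.filter (fun x => v ≤ g x) with hAdef
    have hmemA : ∀ x, x ∈ A ↔ v ≤ g x := by
      intro x
      constructor
      · intro hx; exact (Finset.mem_filter.mp hx).2
      · intro hx
        refine Finset.mem_filter.mpr ⟨?_, hx⟩
        apply hfin.mem_toFinset.mpr
        intro h0
        rw [h0] at hx
        linarith
    have hAne : A.Nonempty := ⟨xv, (hmemA xv).mpr hgxv.ge⟩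
    have hAsubT : A ⊆ T := Finset.filter_subset _ _
    -- the truncated function
    have hsuppg' : Function.support (fun x => min (g x) v') ⊆ Function.support g := by
      intro x hx
      simp only [Function.mem_support] at hx ⊢
      intro h0
      rw [h0, min_eq_left hv'0] at hx
      exact hx rfl
    have hfin' : (Function.support (fun x => min (g x) v')).Finite := hfin.subset hsuppg'
    have hnn' : ∀ x, 0 ≤ min (g x) v' := fun x => le_min (hnn x) hv'0
    set W := ball T with hWdef
    have hTsubW : T ⊆ W := subset_ball T
    have hAsubW : A ⊆ W := hAsubT.trans hTsubW
    -- conversions to sums over W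
    have eS : ∑ᶠ x, g x = ∑ x ∈ W, g x :=
      finsum_eq_finset_sum_of_support_subset _
        (hsuppT.trans (Finset.coe_subset.mpr hTsubW))
    have eS' : (∑ᶠ x, min (g x) v') = ∑ x ∈ W, min (g x) v' :=
      finsum_eq_finset_sum_of_support_subset _
        ((hsuppg'.trans hsuppT).trans (Finset.coe_subset.mpr hTsubW))
    have eL : (∑ᶠ x, ∑ p : Fin n × Bool, |g x - g (rmul x (sgen p))|)
        = ∑ x ∈ W, ∑ p : Fin n × Bool, |g x - g (rmul x (sgen p))| :=
      finsum_eq_finset_sum_of_support_subset _ (Lx_support hsuppT)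
    have eL' : (∑ᶠ x, ∑ p : Fin n × Bool, |min (g x) v' - min (g (rmul x (sgen p))) v'|)
        = ∑ x ∈ W, ∑ p : Fin n × Bool, |min (g x) v' - min (g (rmul x (sgen p))) v'| :=
      finsum_eq_finset_sum_of_support_subset _ (Lx_support (hsuppg'.trans hsuppT))
    have eOut : (∑ᶠ x, ∑ p : Fin n × Bool, if x ∈ A ∧ rmul x (sgen p) ∉ A then (1:ℝ) else 0)
        = ∑ x ∈ W, ∑ p : Fin n × Bool, if x ∈ A ∧ rmul x (sgen p) ∉ A then (1:ℝ) else 0 :=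
      finsum_eq_finset_sum_of_support_subset _
        ((outSupport A).trans (Finset.coe_subset.mpr hAsubW))
    have eInc : (∑ᶠ x, ∑ p : Fin n × Bool, if x ∉ A ∧ rmul x (sgen p) ∈ A then (1:ℝ) else 0)
        = ∑ x ∈ W, ∑ p : Fin n × Bool, if x ∉ A ∧ rmul x (sgen p) ∈ A then (1:ℝ) else 0 :=
      finsum_eq_finset_sum_of_support_subset _
        ((incSupport A).trans (Finset.coe_subset.mpr (ball_mono hAsubT)))
    have hcardA : (A.card : ℝ) = ∑ x ∈ W, (if x ∈ A then (1:ℝ) else 0) := by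
      have hfe : W.filter (fun x => x ∈ A) = A := Finset.ext (fun y => by
        simp only [Finset.mem_filter]
        exact ⟨fun h => h.2, fun h => ⟨hAsubW h, h⟩⟩)
      rw [Finset.sum_boole, hfe]
    -- the S split
    have hS : (∑ᶠ x, g x) = (∑ᶠ x, min (g x) v') + (v - v') * A.card := by
      rw [eS, eS', hcardA, Finset.mul_sum, ← Finset.sum_add_distrib]
      apply Finset.sum_congr rfl
      intro x _
      rcases hsplit x with h | h
      · rw [if_pos ((hmemA x).mpr h.ge), h, min_eq_right hv'v.le]
        ring
      · have hxA : x ∉ A := fun hc => by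
          have := (hmemA x).mp hc
          linarith
        rw [if_neg hxA, min_eq_left h]
        ring
    -- the L split
    have hptx : ∀ x, (∑ p : Fin n × Bool, |g x - g (rmul x (sgen p))|)
        = (∑ p : Fin n × Bool, |min (g x) v' - min (g (rmul x (sgen p))) v'|)
          + (v - v') * ((∑ p : Fin n × Bool, if x ∈ A ∧ rmul x (sgen p) ∉ A then (1:ℝ) else 0)
            + (∑ p : Fin n × Bool, if x ∉ A ∧ rmul x (sgen p) ∈ A then (1:ℝ) else 0)) := by
      intro x
      have hpt : ∀ p ∈ (Finset.univ : Finset (Fin n × Bool)),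
          |g x - g (rmul x (sgen p))| =
            |min (g x) v' - min (g (rmul x (sgen p))) v'| +
            (v - v') * ((if x ∈ A ∧ rmul x (sgen p) ∉ A then (1:ℝ) else 0)
              + (if x ∉ A ∧ rmul x (sgen p) ∈ A then (1:ℝ) else 0)) :=
        fun p _ => ptwise hv'0 hv'v (hsplit x) (hsplit (rmul x (sgen p))) _ _ (hmemA x)
          (hmemA (rmul x (sgen p)))
      rw [Finset.sum_congr rfl hpt, Finset.sum_add_distrib, ← Finset.mul_sum,
        Finset.sum_add_distrib]
    have hL : (∑ᶠ x, ∑ p : Fin n × Bool, |g x - g (rmul x (sgen p))|)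
        = (∑ᶠ x, ∑ p : Fin n × Bool, |min (g x) v' - min (g (rmul x (sgen p))) v'|)
          + (v - v') * (2 * (boundaryCard A : ℝ)) := by
      have h2bd : (2 * (boundaryCard A : ℝ))
          = (∑ x ∈ W, ∑ p : Fin n × Bool, if x ∈ A ∧ rmul x (sgen p) ∉ A then (1:ℝ) else 0)
            + (∑ x ∈ W, ∑ p : Fin n × Bool, if x ∉ A ∧ rmul x (sgen p) ∈ A then (1:ℝ) else 0) := by
        rw [← eOut, ← eInc, outSum, incSum]
        ring
      rw [eL, eL', h2bd]
      rw [Finset.sum_congr rfl (fun x _ => hptx x)]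
      rw [Finset.sum_add_distrib, ← Finset.mul_sum, Finset.sum_add_distrib]
    by_cases hcase : 2 * (boundaryCard A : ℝ) * (∑ᶠ x, g x) ≤
        (∑ᶠ x, ∑ p : Fin n × Bool, |g x - g (rmul x (sgen p))|) * A.card
    · exact ⟨A, hAne, hcase⟩
    push_neg at hcase
    have hcApos : (0:ℝ) < A.card := by exact_mod_cast Finset.card_pos.mpr hAne
    have hLg'nn : (0:ℝ) ≤ ∑ᶠ x, ∑ p : Fin n × Bool,
        |min (g x) v' - min (g (rmul x (sgen p))) v'| := by
      rw [eL']
      apply Finset.sum_nonneg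
      intro x _
      apply Finset.sum_nonneg
      intro p _
      exact abs_nonneg _
    have hbdnn : (0:ℝ) ≤ 2 * (boundaryCard A : ℝ) := by positivity
    rw [hS, hL] at hcase
    have key1 : (∑ᶠ x, ∑ p : Fin n × Bool, |min (g x) v' - min (g (rmul x (sgen p))) v'|)
        * A.card < 2 * (boundaryCard A : ℝ) * (∑ᶠ x, min (g x) v') := by nlinarith [hcase]
    have hS'pos : (0:ℝ) < ∑ᶠ x, min (g x) v' := by
      by_contra hS'le
      push_neg at hS'le
      nlinarith [mul_nonneg hLg'nn hcApos.le, mul_nonneg hbdnn (neg_nonneg.mpr hS'le)]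
    have hne' : (fun x => min (g x) v') ≠ 0 := by
      intro h0
      have hz : (∑ᶠ x, min (g x) v') = 0 := by
        have hz' : ∀ x, min (g x) v' = (fun _ : Cosets n H => (0:ℝ)) x :=
          fun x => congrFun h0 x
        rw [finsum_congr hz', finsum_zero]
      linarith
    have himsub : hfin'.toFinset.image (fun x => min (g x) v') ⊆ (T.image g).erase v := by
      intro y hy
      obtain ⟨x, hxmem, rfl⟩ := Finset.mem_image.mp hy
      have hx0 : min (g x) v' ≠ 0 := hfin'.mem_toFinset.mp hxmem
      rcases hsplit x with h | h
      · have hmv : min (g x) v' = v' := by rw [h]; exact min_eq_right hv'v.le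
        rw [hmv] at hx0 ⊢
        have hBne : B.Nonempty := by
          by_contra hB
          rw [hv'def, dif_neg hB] at hx0
          exact hx0 rfl
        have hv'eq : v' = (B.image g).max' (hBne.image g) := by rw [hv'def, dif_pos hBne]
        obtain ⟨xb, hxb, hgb⟩ := Finset.mem_image.mp (Finset.max'_mem (B.image g) (hBne.image g))
        refine Finset.mem_erase.mpr ⟨hv'v.ne, ?_⟩
        rw [hv'eq, ← hgb]
        exact Finset.mem_image_of_mem g (Finset.mem_filter.mp hxb).1
      · have hmv : min (g x) v' = g x := min_eq_left h
        rw [hmv] at hx0 ⊢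
        refine Finset.mem_erase.mpr ⟨?_, ?_⟩
        · intro hgv
          rw [hgv] at h
          linarith
        · exact Finset.mem_image_of_mem g (hfin.mem_toFinset.mpr hx0)
    have hcard' : (hfin'.toFinset.image (fun x => min (g x) v')).card ≤ k := by
      have h1 := Finset.card_le_card himsub
      rw [Finset.card_erase_of_mem hvmem] at h1
      omega
    obtain ⟨A', hA'ne, hA'⟩ := ih (fun x => min (g x) v') hfin' hnn' hne' hcard'
    refine ⟨A', hA'ne, ?_⟩
    have hcA'pos : (0:ℝ) < A'.card := by exact_mod_cast Finset.card_pos.mpr hA'ne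
    rw [hS, hL]
    clear_value T v B v' A W
    have hw : (0:ℝ) < v - v' := by linarith
    have hratio : (2 * (boundaryCard A' : ℝ) * A.card) * (∑ᶠ x, min (g x) v')
        ≤ (2 * (boundaryCard A : ℝ) * A'.card) * (∑ᶠ x, min (g x) v') := by
      nlinarith [mul_le_mul_of_nonneg_right hA' hcApos.le,
        mul_lt_mul_of_pos_right key1 hcA'pos]
    have hratio2 : 2 * (boundaryCard A' : ℝ) * A.card
        ≤ 2 * (boundaryCard A : ℝ) * A'.card :=
      le_of_mul_le_mul_right hratio hS'pos
    have hx1 := mul_le_mul_of_nonneg_left hratio2 hw.le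
    linarith [hA', hx1]


open Classical in
lemma pair_support_p {g : Cosets n H → ℝ} {T : Finset (Cosets n H)}
    (h : Function.support g ⊆ ↑T) (φ : ℝ → ℝ → ℝ) (hφ : φ 0 0 = 0) (p : Fin n × Bool) :
    (Function.support fun x => φ (g x) (g (rmul x (sgen p)))) ⊆ ↑(ball T) := by
  intro x hx
  simp only [Function.mem_support] at hx
  by_contra hxB
  apply hx
  have h1 : g x = 0 := by
    by_contra h0
    exact hxB (Finset.mem_coe.mpr (subset_ball T (Finset.mem_coe.mp (h h0))))
  have h2 : g (rmul x (sgen p)) = 0 := by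
    by_contra h0
    exact hxB (Finset.mem_coe.mpr (mem_ball_of_rmul (Finset.mem_coe.mp (h h0))))
  rw [h1, h2, hφ]

open Classical in
lemma pairsum_support {g : Cosets n H → ℝ} {T : Finset (Cosets n H)}
    (h : Function.support g ⊆ ↑T) (φ : ℝ → ℝ → ℝ) (hφ : φ 0 0 = 0) :
    (Function.support fun x => ∑ p : Fin n × Bool, φ (g x) (g (rmul x (sgen p))))
      ⊆ ↑(ball T) := by
  intro x hx
  simp only [Function.mem_support] at hx
  by_contra hxB
  apply hx
  apply Finset.sum_eq_zero
  intro p _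
  exact Function.notMem_support.mp (fun hc => hxB (pair_support_p h φ hφ p hc))

open Classical in
lemma finsum_swap {ι : Type} [Fintype ι] (G : ι → Cosets n H → ℝ)
    (W : Finset (Cosets n H)) (h : ∀ i, Function.support (G i) ⊆ ↑W) :
    (∑ᶠ x, ∑ i : ι, G i x) = ∑ i : ι, ∑ᶠ x, G i x := by
  rw [finsum_eq_finset_sum_of_support_subset _ (s := W) (by
    intro x hx
    simp only [Function.mem_support] at hx
    by_contra hxW
    exact hx (Finset.sum_eq_zero fun i _ =>
      Function.notMem_support.mp (fun hc => hxW (h i hc))))]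
  rw [Finset.sum_comm]
  exact Finset.sum_congr rfl (fun i _ => (finsum_eq_finset_sum_of_support_subset _ (h i)).symm)

open Classical in
lemma D_eq_2N (f : Cosets n H → ℝ) (hfin : (Function.support f).Finite) :
    (∑ᶠ x, ∑ p : Fin n × Bool, (f x - f (rmul x (sgen p))) ^ 2)
      = 2 * ∑ᶠ x, ∑ i : Fin n, (f x - f (rmul x (FreeGroup.of i))) ^ 2 := by
  set T := hfin.toFinset with hTdef
  have hsuppT : Function.support f ⊆ ↑T := by rw [hTdef, Set.Finite.coe_toFinset]
  have hsgen_t : ∀ i : Fin n, sgen (i, true) = FreeGroup.of i := fun i => by simp [sgen]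
  have hsgen_f : ∀ i : Fin n, sgen (i, false) = (FreeGroup.of i)⁻¹ := fun i => by simp [sgen]
  have hsup_i : ∀ i : Fin n, (Function.support fun x =>
      (f x - f (rmul x (FreeGroup.of i))) ^ 2) ⊆ ↑(ball T) := by
    intro i
    have := pair_support_p (g := f) hsuppT (fun a b => (a - b)^2) (by norm_num) (i, true)
    rwa [hsgen_t] at this
  have hsupinv_i : ∀ i : Fin n, (Function.support fun x =>
      (f x - f (rmul x (FreeGroup.of i)⁻¹)) ^ 2) ⊆ ↑(ball T) := by
    intro i
    have := pair_support_p (g := f) hsuppT (fun a b => (a - b)^2) (by norm_num) (i, false)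
    rwa [hsgen_f] at this
  have hsupN : (Function.support fun x => ∑ i : Fin n,
      (f x - f (rmul x (FreeGroup.of i))) ^ 2) ⊆ ↑(ball T) := by
    intro x hx
    simp only [Function.mem_support] at hx
    by_contra hxB
    exact hx (Finset.sum_eq_zero fun i _ =>
      Function.notMem_support.mp (fun hc => hxB (hsup_i i hc)))
  have hsupN' : (Function.support fun x => ∑ i : Fin n,
      (f x - f (rmul x (FreeGroup.of i)⁻¹)) ^ 2) ⊆ ↑(ball T) := by
    intro x hx
    simp only [Function.mem_support] at hx
    by_contra hxB
    exact hx (Finset.sum_eq_zero fun i _ =>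
      Function.notMem_support.mp (fun hc => hxB (hsupinv_i i hc)))
  have e1 : ∀ x, (∑ p : Fin n × Bool, (f x - f (rmul x (sgen p)))^2)
      = (∑ i : Fin n, (f x - f (rmul x (FreeGroup.of i)))^2)
        + ∑ i : Fin n, (f x - f (rmul x (FreeGroup.of i)⁻¹))^2 := by
    intro x
    rw [Fintype.sum_prod_type]
    have e2 : ∀ i ∈ (Finset.univ : Finset (Fin n)),
        (∑ b : Bool, (f x - f (rmul x (sgen (i, b))))^2)
        = (f x - f (rmul x (FreeGroup.of i)))^2
          + (f x - f (rmul x (FreeGroup.of i)⁻¹))^2 := by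
      intro i _
      rw [Fintype.sum_bool, hsgen_t, hsgen_f]
    rw [Finset.sum_congr rfl e2, Finset.sum_add_distrib]
  rw [finsum_congr e1,
    finsum_add_distrib (Set.Finite.subset (ball T).finite_toSet hsupN)
      (Set.Finite.subset (ball T).finite_toSet hsupN')]
  have e3 : (∑ᶠ x, ∑ i : Fin n, (f x - f (rmul x (FreeGroup.of i)⁻¹))^2)
      = ∑ᶠ x, ∑ i : Fin n, (f x - f (rmul x (FreeGroup.of i)))^2 := by
    rw [finsum_swap _ (ball T) hsupinv_i, finsum_swap _ (ball T) hsup_i]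
    apply Finset.sum_congr rfl
    intro i _
    rw [← finsum_rmul (fun x => (f x - f (rmul x (FreeGroup.of i)⁻¹))^2) (FreeGroup.of i)]
    apply finsum_congr
    intro x
    have hxx : rmul (rmul x (FreeGroup.of i)) (FreeGroup.of i)⁻¹ = x := by
      rw [rmul_rmul]
      simp [rmul_one]
    rw [hxx]
    ring
  rw [e3]
  ring

set_option maxHeartbeats 1000000 in
open Classical in
lemma per_f (hn : 2 ≤ n) (f : Cosets n H → ℝ) (hfin : (Function.support f).Finite)
    (hnn : ∀ x, 0 ≤ f x) (hne : f ≠ 0) :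
    isoConst n H ^ 2 ≤
      ((∑ᶠ x, ∑ i : Fin n, (f x - f (rmul x (FreeGroup.of i))) ^ 2) /
          (2 * n * ∑ᶠ x, (f x) ^ 2)) *
        (2 - (∑ᶠ x, ∑ i : Fin n, (f x - f (rmul x (FreeGroup.of i))) ^ 2) /
          (2 * n * ∑ᶠ x, (f x) ^ 2)) := by
  have hnR : (0:ℝ) < n := by exact_mod_cast (by omega : 0 < n)
  set T := hfin.toFinset with hTdef
  have hsuppT : Function.support f ⊆ ↑T := by rw [hTdef, Set.Finite.coe_toFinset]
  obtain ⟨x₀, hx₀⟩ := Function.ne_iff.mp hne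
  have hx₀' : f x₀ ≠ 0 := by simpa using hx₀
  have hTne : T.Nonempty := ⟨x₀, hfin.mem_toFinset.mpr hx₀'⟩
  have hsupp_sq : (Function.support fun x => f x ^ 2) = Function.support f := by
    ext x
    simp [Function.mem_support, pow_eq_zero_iff]
  set S := ∑ᶠ x, (f x) ^ 2 with hSdef
  set N := ∑ᶠ x, ∑ i : Fin n, (f x - f (rmul x (FreeGroup.of i))) ^ 2 with hNdef
  have hsuppsqT : (Function.support fun x => f x ^ 2) ⊆ ↑T := by
    rw [hsupp_sq]; exact hsuppT
  have heS : S = ∑ x ∈ T, f x ^ 2 := finsum_eq_finset_sum_of_support_subset _ hsuppsqT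
  have hSpos : 0 < S := by
    rw [heS]
    apply Finset.sum_pos
    · intro x hx
      have : f x ≠ 0 := hfin.mem_toFinset.mp hx
      exact lt_of_le_of_ne (sq_nonneg _) (Ne.symm (pow_ne_zero 2 this))
    · exact hTne
  -- apply the coarea lemma to g = f^2
  have hfin2 : (Function.support fun x => f x ^ 2).Finite := by
    rw [hsupp_sq]; exact hfin
  have hne2 : (fun x => f x ^ 2) ≠ 0 := by
    intro h0
    apply hx₀'
    have h1 : f x₀ ^ 2 = 0 := congrFun h0 x₀
    exact pow_eq_zero_iff (n := 2) (by norm_num) |>.mp h1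
  obtain ⟨A, hAne, hkey⟩ := key_aux (hfin2.toFinset.image fun x => f x ^ 2).card
    (fun x => f x ^ 2) hfin2 (fun x => sq_nonneg _) hne2 le_rfl
  -- basic positivity facts
  have hcApos : (0:ℝ) < A.card := by exact_mod_cast Finset.card_pos.mpr hAne
  have hbd0 : (0:ℝ) ≤ (boundaryCard A : ℝ) := Nat.cast_nonneg _
  -- isoConst bounds
  have hmem : ((boundaryCard A : ℝ) / (2 * n * A.card)) ∈
      {r : ℝ | ∃ A : Finset (Cosets n H), A.Nonempty ∧
        r = (boundaryCard A : ℝ) / (2 * n * A.card)} := ⟨A, hAne, rfl⟩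
  have hlb : ∀ r ∈ {r : ℝ | ∃ A : Finset (Cosets n H), A.Nonempty ∧
      r = (boundaryCard A : ℝ) / (2 * n * A.card)}, 0 ≤ r := by
    rintro r ⟨A', _, rfl⟩
    positivity
  have hiso_le : isoConst n H ≤ (boundaryCard A : ℝ) / (2 * n * A.card) :=
    csInf_le ⟨0, fun r hr => hlb r hr⟩ hmem
  have hiso0 : 0 ≤ isoConst n H := le_csInf ⟨_, hmem⟩ hlb
  -- Cauchy-Schwarz setup over W ×ˢ univ
  set W := ball T with hWdef
  have hTsubW : T ⊆ W := subset_ball T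
  set L := ∑ᶠ x, ∑ p : Fin n × Bool, |f x ^ 2 - f (rmul x (sgen p)) ^ 2| with hLdef
  have heL : L = ∑ x ∈ W, ∑ p : Fin n × Bool, |f x ^ 2 - f (rmul x (sgen p)) ^ 2| :=
    finsum_eq_finset_sum_of_support_subset _
      (pairsum_support hsuppT (fun a b => |a^2 - b^2|) (by norm_num))
  have hL0 : 0 ≤ L := by
    rw [heL]
    apply Finset.sum_nonneg
    intro x _
    apply Finset.sum_nonneg
    intro p _
    exact abs_nonneg _
  -- rewrite L as a sum over the product set
  set P := W ×ˢ (Finset.univ : Finset (Fin n × Bool)) with hPdef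
  have hLprod : L = ∑ q ∈ P,
      |f q.1 - f (rmul q.1 (sgen q.2))| * (f q.1 + f (rmul q.1 (sgen q.2))) := by
    rw [heL, ← Finset.sum_product'
      (f := fun x p => |f x ^ 2 - f (rmul x (sgen p)) ^ 2|)]
    apply Finset.sum_congr rfl
    intro q _
    have h1 : f q.1 ^ 2 - f (rmul q.1 (sgen q.2)) ^ 2
        = (f q.1 - f (rmul q.1 (sgen q.2))) * (f q.1 + f (rmul q.1 (sgen q.2))) := by ring
    rw [h1, abs_mul, abs_of_nonneg (add_nonneg (hnn _) (hnn _))]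
  have hCS := Finset.sum_mul_sq_le_sq_mul_sq P
    (fun q => |f q.1 - f (rmul q.1 (sgen q.2))|)
    (fun q => f q.1 + f (rmul q.1 (sgen q.2)))
  -- compute the two factors
  have hu2 : (∑ q ∈ P, |f q.1 - f (rmul q.1 (sgen q.2))| ^ 2) = 2 * N := by
    have h1 : ∀ q ∈ P, |f q.1 - f (rmul q.1 (sgen q.2))| ^ 2
        = (f q.1 - f (rmul q.1 (sgen q.2))) ^ 2 := fun q _ => sq_abs _
    rw [Finset.sum_congr rfl h1, Finset.sum_product'
      (f := fun x p => (f x - f (rmul x (sgen p))) ^ 2)]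
    rw [← finsum_eq_finset_sum_of_support_subset
      (fun x => ∑ p : Fin n × Bool, (f x - f (rmul x (sgen p))) ^ 2)
      (pairsum_support hsuppT (fun a b => (a - b)^2) (by norm_num))]
    exact D_eq_2N f hfin
  have hcard2n : ((Finset.univ : Finset (Fin n × Bool)).card : ℝ) = 2 * n := by
    rw [Finset.card_univ, Fintype.card_prod, Fintype.card_fin, Fintype.card_bool]
    push_cast
    ring
  have hfy : (∑ q ∈ P, f (rmul q.1 (sgen q.2)) ^ 2) = 2 * n * S := by
    rw [Finset.sum_product' (f := fun x p => f (rmul x (sgen p)) ^ 2), Finset.sum_comm]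
    have h1 : ∀ p ∈ (Finset.univ : Finset (Fin n × Bool)),
        (∑ x ∈ W, f (rmul x (sgen p)) ^ 2) = S := by
      intro p _
      rw [← finsum_eq_finset_sum_of_support_subset (fun x => f (rmul x (sgen p)) ^ 2)
        (pair_support_p hsuppT (fun a b => b ^ 2) (by norm_num) p)]
      rw [hSdef, finsum_rmul (fun x => f x ^ 2) (sgen p)]
    rw [Finset.sum_congr rfl h1, Finset.sum_const, nsmul_eq_mul, hcard2n]
  have hfx : (∑ q ∈ P, f q.1 ^ 2) = 2 * n * S := by
    rw [Finset.sum_product' (f := fun x _ => f x ^ 2)]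
    have h1 : ∀ x ∈ W, (∑ _p : Fin n × Bool, f x ^ 2) = (2 * n) * f x ^ 2 := by
      intro x _
      rw [Finset.sum_const, nsmul_eq_mul, hcard2n]
    rw [Finset.sum_congr rfl h1, ← Finset.mul_sum]
    have h2 : (∑ x ∈ W, f x ^ 2) = S := by
      rw [heS]
      symm
      apply Finset.sum_subset hTsubW
      intro x _ hxT
      by_contra h0
      exact hxT (hfin.mem_toFinset.mpr (by
        intro hfx0
        exact h0 (by rw [hfx0]; ring)))
    rw [h2]
  have hw2 : (∑ q ∈ P, (f q.1 + f (rmul q.1 (sgen q.2))) ^ 2)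
      = 2 * (2 * n * S) + 2 * (2 * n * S) - 2 * N := by
    have h1 : ∀ q ∈ P, (f q.1 + f (rmul q.1 (sgen q.2))) ^ 2
        = 2 * f q.1 ^ 2 + 2 * f (rmul q.1 (sgen q.2)) ^ 2
          - (f q.1 - f (rmul q.1 (sgen q.2))) ^ 2 := fun q _ => by ring
    have h3 : (∑ q ∈ P, (f q.1 - f (rmul q.1 (sgen q.2))) ^ 2) = 2 * N := by
      have h4 : ∀ q ∈ P, (f q.1 - f (rmul q.1 (sgen q.2))) ^ 2
          = |f q.1 - f (rmul q.1 (sgen q.2))| ^ 2 := fun q _ => (sq_abs _).symm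
      rw [Finset.sum_congr rfl h4, hu2]
    rw [Finset.sum_congr rfl h1, Finset.sum_sub_distrib, Finset.sum_add_distrib,
      ← Finset.mul_sum, ← Finset.mul_sum, hfx, hfy, h3]
  -- combine
  have hLsq : L ^ 2 ≤ 2 * N * (2 * (2 * n * S) + 2 * (2 * n * S) - 2 * N) := by
    rw [hLprod]
    calc (∑ q ∈ P, |f q.1 - f (rmul q.1 (sgen q.2))| * (f q.1 + f (rmul q.1 (sgen q.2)))) ^ 2
        ≤ (∑ q ∈ P, |f q.1 - f (rmul q.1 (sgen q.2))| ^ 2) *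
          (∑ q ∈ P, (f q.1 + f (rmul q.1 (sgen q.2))) ^ 2) := hCS
      _ = 2 * N * (2 * (2 * n * S) + 2 * (2 * n * S) - 2 * N) := by rw [hu2, hw2]
  -- final algebra
  have hncApos : (0:ℝ) < 2 * n * A.card := by positivity
  have h1' : isoConst n H * (2 * n * A.card) ≤ (boundaryCard A : ℝ) :=
    (le_div_iff₀ hncApos).mp hiso_le
  have c1 : (isoConst n H * (2 * n * A.card)) ^ 2 ≤ (boundaryCard A : ℝ) ^ 2 :=
    pow_le_pow_left₀ (mul_nonneg hiso0 hncApos.le) h1' 2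
  have c2 : (2 * (boundaryCard A : ℝ) * S) ^ 2 ≤ (L * A.card) ^ 2 :=
    pow_le_pow_left₀ (by positivity) hkey 2
  have d1 : (isoConst n H * (2 * n * A.card)) ^ 2 * (4 * S ^ 2)
      ≤ (boundaryCard A : ℝ) ^ 2 * (4 * S ^ 2) :=
    mul_le_mul_of_nonneg_right c1 (by positivity)
  have e3 : L ^ 2 * A.card ^ 2
      ≤ (2 * N * (2 * (2 * n * S) + 2 * (2 * n * S) - 2 * N)) * A.card ^ 2 :=
    mul_le_mul_of_nonneg_right hLsq (sq_nonneg _)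
  have goal' : isoConst n H ^ 2 * (4 * n ^ 2 * S ^ 2) ≤ N * (4 * n * S - N) := by
    have cA2pos : (0:ℝ) < (A.card : ℝ) ^ 2 := by positivity
    have hmain : isoConst n H ^ 2 * (4 * n ^ 2 * S ^ 2) * (A.card : ℝ) ^ 2
        ≤ N * (4 * n * S - N) * (A.card : ℝ) ^ 2 := by nlinarith [d1, c2, e3]
    exact le_of_mul_le_mul_right hmain cA2pos
  have hrw : N / (2 * n * S) * (2 - N / (2 * n * S))
      = N * (4 * n * S - N) / (4 * n ^ 2 * S ^ 2) := by
    field_simp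
    ring
  rw [hrw, le_div_iff₀ (by positivity)]
  exact goal'

open Classical in
lemma Ninner_support {g : Cosets n H → ℝ} {T : Finset (Cosets n H)}
    (h : Function.support g ⊆ ↑T) :
    (Function.support fun x => ∑ i : Fin n, (g x - g (rmul x (FreeGroup.of i))) ^ 2)
      ⊆ ↑(ball T) := by
  intro x hx
  simp only [Function.mem_support] at hx
  by_contra hxB
  apply hx
  apply Finset.sum_eq_zero
  intro i _
  have hgt : sgen (i, true) = FreeGroup.of i := by simp [sgen]
  have h1 : g x = 0 := by
    by_contra h0
    exact hxB (Finset.mem_coe.mpr (subset_ball T (Finset.mem_coe.mp (h h0))))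
  have h2 : g (rmul x (FreeGroup.of i)) = 0 := by
    by_contra h0
    have hm : rmul x (sgen (i, true)) ∈ T := by
      rw [hgt]; exact Finset.mem_coe.mp (h h0)
    exact hxB (Finset.mem_coe.mpr (mem_ball_of_rmul hm))
  rw [h1, h2]
  ring

open Classical in
theorem stmt7aux (hn : 2 ≤ n) :
    isoConst n H ≤ Real.sqrt (1 - (1 - lambdaZero n H) ^ 2) := by
  -- base point and nonemptiness of the Rayleigh-quotient set
  set x₀b : Cosets n H := Quotient.mk (QuotientGroup.rightRel H) (1 : F n) with hx₀b
  set f₀ : Cosets n H → ℝ := fun x => if x = x₀b then (1:ℝ) else 0 with hf₀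
  have hf₀fin : (Function.support f₀).Finite := by
    apply (Set.finite_singleton x₀b).subset
    intro x hx
    simp only [Function.mem_support, hf₀] at hx
    by_contra hxx
    exact hx (if_neg hxx)
  have hf₀ne : f₀ ≠ 0 := by
    intro h0
    have := congrFun h0 x₀b
    simp [hf₀] at this
  set SL := {r : ℝ | ∃ f : Cosets n H → ℝ, (Function.support f).Finite ∧ f ≠ 0 ∧
    r = (∑ᶠ x, ∑ i : Fin n, (f x - f (rmul x (FreeGroup.of i))) ^ 2) /
        (2 * n * ∑ᶠ x, (f x) ^ 2)} with hSL
  have hSne : SL.Nonempty := ⟨_, f₀, hf₀fin, hf₀ne, rfl⟩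
  have hlb0 : ∀ r ∈ SL, 0 ≤ r := by
    rintro r ⟨f, hfin, hne, rfl⟩
    apply div_nonneg
    · apply finsum_nonneg
      intro x
      exact Finset.sum_nonneg fun i _ => sq_nonneg _
    · have : (0:ℝ) ≤ ∑ᶠ x, (f x)^2 := finsum_nonneg fun x => sq_nonneg _
      positivity
  have hlz0 : 0 ≤ lambdaZero n H := le_csInf hSne hlb0
  have hbdd : BddBelow SL := ⟨0, fun r hr => hlb0 r hr⟩
  -- it suffices to bound the square
  suffices hsq : isoConst n H ^ 2 ≤ 1 - (1 - lambdaZero n H) ^ 2 by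
    exact Real.le_sqrt_of_sq_le hsq
  by_contra hlt
  push_neg at hlt
  set δ := isoConst n H ^ 2 - (1 - (1 - lambdaZero n H) ^ 2) with hδ
  have hδpos : 0 < δ := by rw [hδ]; linarith
  obtain ⟨r, hrS, hrlt⟩ := Real.lt_sInf_add_pos hSne (show 0 < δ/4 by linarith)
  obtain ⟨f, hfinf, hnef, hreq⟩ := hrS
  -- pass to |f|
  set fa : Cosets n H → ℝ := fun x => |f x| with hfa
  have hsupp_eq : Function.support fa = Function.support f := by
    ext x
    simp [hfa, Function.mem_support, abs_eq_zero]
  have hfinfa : (Function.support fa).Finite := by rw [hsupp_eq]; exact hfinf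
  have hnefa : fa ≠ 0 := by
    intro h0
    apply hnef
    funext x
    have := congrFun h0 x
    simpa [hfa, abs_eq_zero] using this
  have hnnfa : ∀ x, 0 ≤ fa x := fun x => abs_nonneg _
  -- R is the Rayleigh quotient of fa
  set Nfa := ∑ᶠ x, ∑ i : Fin n, (fa x - fa (rmul x (FreeGroup.of i))) ^ 2 with hNfa
  set Nf := ∑ᶠ x, ∑ i : Fin n, (f x - f (rmul x (FreeGroup.of i))) ^ 2 with hNf
  set Sf := ∑ᶠ x, (f x) ^ 2 with hSf
  set R := Nfa / (2 * n * Sf) with hR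
  have hSfa_eq : (∑ᶠ x, (fa x) ^ 2) = Sf := finsum_congr fun x => by rw [hfa, sq_abs]
  have hRmem : R ∈ SL := by
    refine ⟨fa, hfinfa, hnefa, ?_⟩
    rw [hR, hNfa, hSfa_eq]
  have hlzR : lambdaZero n H ≤ R := csInf_le hbdd hRmem
  -- compare Nfa with Nf
  have hNle : Nfa ≤ Nf := by
    set T := hfinf.toFinset with hT
    have hsuppT : Function.support f ⊆ ↑T := by rw [hT, Set.Finite.coe_toFinset]
    have hsuppTa : Function.support fa ⊆ ↑T := by rw [hsupp_eq]; exact hsuppT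
    rw [hNfa, hNf,
      finsum_eq_finset_sum_of_support_subset _ (Ninner_support hsuppTa),
      finsum_eq_finset_sum_of_support_subset _ (Ninner_support hsuppT)]
    apply Finset.sum_le_sum
    intro x _
    apply Finset.sum_le_sum
    intro i _
    have h1 : |fa x - fa (rmul x (FreeGroup.of i))|
        ≤ |f x - f (rmul x (FreeGroup.of i))| := abs_abs_sub_abs_le_abs_sub _ _
    calc (fa x - fa (rmul x (FreeGroup.of i))) ^ 2
        = |fa x - fa (rmul x (FreeGroup.of i))| ^ 2 := (sq_abs _).symm
      _ ≤ |f x - f (rmul x (FreeGroup.of i))| ^ 2 :=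
          pow_le_pow_left₀ (abs_nonneg _) h1 2
      _ = (f x - f (rmul x (FreeGroup.of i))) ^ 2 := sq_abs _
  have hSfpos : 0 < Sf := by
    obtain ⟨x₁, hx₁⟩ := Function.ne_iff.mp hnef
    have hx₁' : f x₁ ≠ 0 := by simpa using hx₁
    rw [hSf, finsum_eq_finset_sum_of_support_subset (fun x => (f x)^2)
      (s := hfinf.toFinset) (by
        intro x hx
        simp only [Function.mem_support] at hx
        apply hfinf.mem_toFinset.mpr
        intro h0
        rw [h0] at hx
        exact hx (by ring))]
    apply Finset.sum_pos
    · intro x hx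
      have : f x ≠ 0 := hfinf.mem_toFinset.mp hx
      exact lt_of_le_of_ne (sq_nonneg _) (Ne.symm (pow_ne_zero 2 this))
    · exact ⟨x₁, hfinf.mem_toFinset.mpr hx₁'⟩
  have hnR : (0:ℝ) < n := by exact_mod_cast (by omega : 0 < n)
  have hRr : R ≤ r := by
    rw [hR, hreq]
    gcongr
  -- per_f bound
  have hperf := per_f hn fa hfinfa hnnfa hnefa
  rw [hSfa_eq] at hperf
  -- conclude
  have hRδ : R < lambdaZero n H + δ/4 := lt_of_le_of_lt hRr hrlt
  have hlzsq : lambdaZero n H ^ 2 ≤ R ^ 2 := pow_le_pow_left₀ hlz0 hlzR 2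
  have hfinal : R * (2 - R) ≤ lambdaZero n H * (2 - lambdaZero n H) + δ/2 := by nlinarith
  have hid : lambdaZero n H * (2 - lambdaZero n H) = 1 - (1 - lambdaZero n H)^2 := by ring
  rw [← hNfa, ← hR] at hperf
  linarith [hperf, hfinal, hδpos]

end Aux

/-- Cheeger-type inequality of Mohar: For every subgroup `H ≤ F_n`
(`n ≥ 2`), `i(Γ_H) ≤ √(1 − (1 − λ₀(Γ_H))²)`. -/
theorem stmt7 (n : ℕ) (hn : 2 ≤ n) (H : Subgroup (F n)) :
    isoConst n H ≤ Real.sqrt (1 - (1 - lambdaZero n H) ^ 2) :=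
  stmt7aux hn

end JM
end
end

section
/- Let n ≥ 2 and let H be a subgroup of the free group F_n of infinite index. Then the isoperimetric constant of the quotient graph satisfies i(Γ_H) ≤ (n−1)/n = i(T_n). -/
open Filter Real

noncomputable section

namespace JM

section Aux

variable {n : ℕ} {H : Subgroup (F n)}

lemma rmul_mk (g a : F n) :
    rmul (Quotient.mk (QuotientGroup.rightRel H) g) a
      = Quotient.mk (QuotientGroup.rightRel H) (g * a) := rfl

lemma sgen_mul_flip (p : Fin n × Bool) : sgen p * sgen (p.1, !p.2) = 1 := by
  obtain ⟨i, b⟩ := p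
  cases b <;> simp [sgen]

lemma cosetDist_exists (x : Cosets n H) :
    ∃ g : F n, Quotient.mk (QuotientGroup.rightRel H) g = x ∧ FreeGroup.norm g = cosetDist x := by
  have hne : (FreeGroup.norm ''
      {g : F n | Quotient.mk (QuotientGroup.rightRel H) g = x}).Nonempty := by
    obtain ⟨g, hg⟩ := Quotient.exists_rep x
    exact ⟨FreeGroup.norm g, g, hg, rfl⟩
  obtain ⟨g, hg, hn⟩ := Nat.sInf_mem hne
  exact ⟨g, hg, hn⟩

lemma cosetDist_le (g : F n) :
    cosetDist (Quotient.mk (QuotientGroup.rightRel H) g) ≤ FreeGroup.norm g :=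
  Nat.sInf_le ⟨g, rfl, rfl⟩

lemma eq_base_of_cosetDist_eq_zero {x : Cosets n H} (h : cosetDist x = 0) :
    x = Quotient.mk (QuotientGroup.rightRel H) 1 := by
  obtain ⟨g, hg, hn⟩ := cosetDist_exists x
  rw [h, FreeGroup.norm_eq_zero] at hn
  rw [← hg, hn]

lemma reduce_of_reduce_append {l t : List (Fin n × Bool)}
    (h : FreeGroup.reduce (l ++ t) = l ++ t) : FreeGroup.reduce l = l := by
  have h2 : FreeGroup.Red (l ++ t) (FreeGroup.reduce l ++ t) :=
    FreeGroup.Red.append_append FreeGroup.reduce.red FreeGroup.Red.refl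
  have h3 : FreeGroup.reduce (l ++ t) = FreeGroup.reduce l ++ t :=
    FreeGroup.reduce.min (by rw [h]; exact h2)
  have h4 : l ++ t = FreeGroup.reduce l ++ t := by rw [← h3, h]
  have hlen : l.length = (FreeGroup.reduce l).length := by
    have := congrArg List.length h4
    simp only [List.length_append] at this
    omega
  exact ((List.append_inj h4 hlen).1).symm

lemma sgen_eq_mk (p : Fin n × Bool) : sgen p = FreeGroup.mk [p] := by
  obtain ⟨i, b⟩ := p
  cases b
  · show (FreeGroup.of i)⁻¹ = _
    rw [FreeGroup.of, FreeGroup.inv_mk]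
    simp [FreeGroup.invRev]
  · rfl

lemma norm_decomp (g : F n) (h : 0 < FreeGroup.norm g) :
    ∃ (g' : F n) (p : Fin n × Bool),
      g = g' * sgen p ∧ FreeGroup.norm g' + 1 = FreeGroup.norm g := by
  set w := g.toWord with hw
  have hwne : w ≠ [] := by
    intro hnil
    have : FreeGroup.norm g = 0 := by rw [FreeGroup.norm, ← hw, hnil]; rfl
    omega
  set p := w.getLast hwne with hp
  set l := w.dropLast with hl
  have hsplit : l ++ [p] = w := List.dropLast_append_getLast hwne
  have hred : FreeGroup.reduce l = l := by
    apply reduce_of_reduce_append (t := [p])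
    rw [hsplit, hw]
    exact FreeGroup.reduce_toWord g
  refine ⟨FreeGroup.mk l, p, ?_, ?_⟩
  · rw [sgen_eq_mk, FreeGroup.mul_mk, hsplit, hw, FreeGroup.mk_toWord]
  · have hnl : FreeGroup.norm (FreeGroup.mk l) = l.length := by
      rw [FreeGroup.norm, FreeGroup.toWord_mk, hred]
    have hlenw : l.length + 1 = w.length := by
      have := congrArg List.length hsplit
      simp only [List.length_append, List.length_cons, List.length_nil] at this
      omega
    rw [hnl, FreeGroup.norm, ← hw]
    exact hlenw

lemma exists_parent (x : Cosets n H) (hx : 0 < cosetDist x) :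
    ∃ yp : Cosets n H × (Fin n × Bool),
      cosetDist yp.1 < cosetDist x ∧ rmul yp.1 (sgen yp.2) = x := by
  obtain ⟨g, hg, hng⟩ := cosetDist_exists x
  obtain ⟨g', p, rfl, hnorm⟩ := norm_decomp g (by omega)
  refine ⟨(Quotient.mk (QuotientGroup.rightRel H) g', p), ?_, ?_⟩
  · exact lt_of_le_of_lt (cosetDist_le g') (by omega)
  · rw [rmul_mk]; exact hg

lemma finite_ball (R : ℕ) : {x : Cosets n H | cosetDist x ≤ R}.Finite := by
  have h1 : {g : F n | FreeGroup.norm g ≤ R}.Finite := by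
    apply Set.Finite.of_finite_image (f := FreeGroup.toWord) _
      FreeGroup.toWord_injective.injOn
    apply (List.finite_length_le (Fin n × Bool) R).subset
    rintro _ ⟨g, hg, rfl⟩
    exact hg
  apply ((h1.image (Quotient.mk (QuotientGroup.rightRel H))).subset)
  intro x hx
  obtain ⟨g, hg, hng⟩ := cosetDist_exists x
  exact ⟨g, by rw [Set.mem_setOf_eq, hng]; exact hx, hg⟩

lemma boundary_bound (hn : 2 ≤ n) (R : ℕ) (A : Finset (Cosets n H))
    (hA : ∀ x, x ∈ A ↔ cosetDist x ≤ R) :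
    boundaryCard A + 2 * A.card ≤ 2 * n * A.card + 2 := by
  classical
  set x₀ : Cosets n H := Quotient.mk (QuotientGroup.rightRel H) 1 with hx₀
  have hx₀A : x₀ ∈ A := by
    rw [hA]
    have h1 : cosetDist x₀ ≤ FreeGroup.norm (1 : F n) := cosetDist_le 1
    simp only [FreeGroup.norm_one] at h1
    omega
  set E : Finset (Cosets n H × (Fin n × Bool)) :=
    A ×ˢ (Finset.univ : Finset (Fin n × Bool)) with hE
  set Bf := E.filter (fun p => ¬ rmul p.1 (sgen p.2) ∈ A) with hBf
  set If := E.filter (fun p => rmul p.1 (sgen p.2) ∈ A) with hIf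
  have hBcard : boundaryCard A = Bf.card := by
    rw [← Nat.card_eq_finsetCard]
    exact Nat.card_congr (Equiv.subtypeEquivRight (fun p => by
      simp [hBf, hE, Finset.mem_filter, Finset.mem_product]))
  have hsum : If.card + Bf.card = E.card :=
    Finset.card_filter_add_card_filter_not _
  have hEcard : E.card = A.card * (n * 2) := by
    rw [hE, Finset.card_product, Finset.card_univ, Fintype.card_prod,
      Fintype.card_fin, Fintype.card_bool]
  -- parent function
  let pr : Cosets n H → Cosets n H × (Fin n × Bool) := fun x =>
    if h : 0 < cosetDist x then (exists_parent x h).choose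
    else (x, (⟨0, by omega⟩, true))
  have hpr : ∀ x, 0 < cosetDist x →
      cosetDist (pr x).1 < cosetDist x ∧ rmul (pr x).1 (sgen (pr x).2) = x := by
    intro x h
    simp only [pr, dif_pos h]
    exact (exists_parent x h).choose_spec
  let ψ : Cosets n H × Bool → Cosets n H × (Fin n × Bool) := fun q =>
    if q.2 then pr q.1 else (q.1, ((pr q.1).2.1, !(pr q.1).2.2))
  set s : Finset (Cosets n H × Bool) :=
    (A.erase x₀) ×ˢ (Finset.univ : Finset Bool) with hs
  have hpos : ∀ x ∈ A.erase x₀, 0 < cosetDist x := by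
    intro x hx
    rcases Nat.eq_zero_or_pos (cosetDist x) with h | h
    · exact absurd (eq_base_of_cosetDist_eq_zero h) (Finset.ne_of_mem_erase hx)
    · exact h
  have hflip : ∀ x, 0 < cosetDist x →
      rmul x (sgen ((pr x).2.1, !(pr x).2.2)) = (pr x).1 := by
    intro x h
    obtain ⟨h1, h2⟩ := hpr x h
    set y := (pr x).1 with hy
    set p := (pr x).2 with hp
    rw [← h2, rmul_rmul, sgen_mul_flip, rmul_one]
  have hmaps : ∀ q ∈ s, ψ q ∈ If := by
    rintro ⟨x, b⟩ hq
    rw [hs, Finset.mem_product] at hq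
    have hxe := hq.1
    have hx0 := hpos x hxe
    have hxA : x ∈ A := Finset.mem_of_mem_erase hxe
    obtain ⟨h1, h2⟩ := hpr x hx0
    have hyA : (pr x).1 ∈ A := by
      rw [hA]
      have := (hA x).mp hxA
      omega
    cases b
    · -- ψ = (x, flip p)
      show (x, ((pr x).2.1, !(pr x).2.2)) ∈ If
      rw [hIf, Finset.mem_filter, hE, Finset.mem_product]
      refine ⟨⟨hxA, Finset.mem_univ _⟩, ?_⟩
      rw [hflip x hx0]
      exact hyA
    · -- ψ = pr x
      show pr x ∈ If
      rw [hIf, Finset.mem_filter, hE, Finset.mem_product]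
      exact ⟨⟨hyA, Finset.mem_univ _⟩, by rw [h2]; exact hxA⟩
  have hinj : Set.InjOn ψ ↑s := by
    rintro ⟨x, b⟩ hq ⟨x', b'⟩ hq' heq
    simp only [Finset.coe_product, hs, Set.mem_prod, Finset.mem_coe] at hq hq'
    have hx0 := hpos x hq.1
    have hx0' := hpos x' hq'.1
    obtain ⟨hd1, he1⟩ := hpr x hx0
    obtain ⟨hd1', he1'⟩ := hpr x' hx0'
    cases b <;> cases b' <;> simp only [ψ, if_true, if_false, Bool.false_eq_true] at heq
    · -- both false
      have : x = x' := congrArg Prod.fst heq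
      rw [this]
    · -- b = false, b' = true : (x, flip p_x) = pr x'
      exfalso
      have hfst : (pr x').1 = x := (congrArg Prod.fst heq).symm
      have hsnd : (pr x').2 = ((pr x).2.1, !(pr x).2.2) := (congrArg Prod.snd heq).symm
      have hx' : x' = (pr x).1 := by
        rw [← he1', hfst, hsnd]
        exact hflip x hx0
      rw [hfst] at hd1'
      rw [← hx'] at hd1
      omega
    · -- b = true, b' = false : pr x = (x', flip p_x')
      exfalso
      have hfst : (pr x).1 = x' := congrArg Prod.fst heq
      have hsnd : (pr x).2 = ((pr x').2.1, !(pr x').2.2) := congrArg Prod.snd heq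
      have hx : x = (pr x').1 := by
        rw [← he1, hfst, hsnd]
        exact hflip x' hx0'
      rw [hfst] at hd1
      rw [← hx] at hd1'
      omega
    · -- both true : pr x = pr x'
      have : x = x' := by rw [← he1, ← he1', heq]
      rw [this]
  have hcard_s : s.card = (A.card - 1) * 2 := by
    rw [hs, Finset.card_product, Finset.card_univ, Fintype.card_bool,
      Finset.card_erase_of_mem hx₀A]
  have hIcard : (A.card - 1) * 2 ≤ If.card := by
    rw [← hcard_s]
    exact Finset.card_le_card_of_injOn ψ hmaps hinj
  have hApos : 1 ≤ A.card := Finset.card_pos.mpr ⟨x₀, hx₀A⟩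
  have hEq : A.card * (n * 2) = 2 * n * A.card := by ring
  rw [hBcard]
  omega

end Aux

/-- If `H ≤ F_n` (`n ≥ 2`) has infinite index, then
`i(Γ_H) ≤ (n−1)/n = i(T_n)`. -/
theorem stmt9 (n : ℕ) (hn : 2 ≤ n) (H : Subgroup (F n))
    (hindex : Infinite (F n ⧸ H)) :
    isoConst n H ≤ (n - 1) / n := by
  classical
  haveI : Infinite (Cosets n H) :=
    (QuotientGroup.quotientRightRelEquivQuotientLeftRel H).infinite_iff.mpr hindex
  have hbdd : BddBelow {r : ℝ | ∃ A : Finset (Cosets n H), A.Nonempty ∧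
      r = (boundaryCard A : ℝ) / (2 * n * A.card)} := by
    refine ⟨0, ?_⟩
    rintro r ⟨A, hA, rfl⟩
    positivity
  have key : ∀ ε : ℝ, 0 < ε → isoConst n H ≤ (n - 1) / n + ε := by
    intro ε hε
    obtain ⟨N, hN⟩ := exists_nat_gt (1 / (n * ε))
    set M := max N 1 with hM
    obtain ⟨s, hscard⟩ := Infinite.exists_subset_card_eq (Cosets n H) M
    set R := s.sup cosetDist with hR
    set A := (finite_ball (H := H) R).toFinset with hAdef
    have hA : ∀ x, x ∈ A ↔ cosetDist x ≤ R := fun x => Set.Finite.mem_toFinset _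
    have hsub : s ⊆ A := by
      intro x hx
      rw [hA]
      exact Finset.le_sup hx
    have hcard : M ≤ A.card := hscard ▸ Finset.card_le_card hsub
    have hApos : 1 ≤ A.card := le_trans (le_max_right N 1) hcard
    have hNA : N ≤ A.card := le_trans (le_max_left N 1) hcard
    have hAne : A.Nonempty := Finset.card_pos.mp hApos
    have hmem : (boundaryCard A : ℝ) / (2 * n * A.card) ∈
        {r : ℝ | ∃ A : Finset (Cosets n H), A.Nonempty ∧
          r = (boundaryCard A : ℝ) / (2 * n * A.card)} := ⟨A, hAne, rfl⟩
    have h1 : isoConst n H ≤ (boundaryCard A : ℝ) / (2 * n * A.card) :=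
      csInf_le hbdd hmem
    have hbound := boundary_bound hn R A hA
    -- pass to the reals
    set k : ℝ := (A.card : ℝ) with hk
    have hk1 : (1 : ℝ) ≤ k := by rw [hk]; exact_mod_cast hApos
    have hkN : (N : ℝ) ≤ k := by rw [hk]; exact_mod_cast hNA
    have hnR : (2 : ℝ) ≤ (n : ℝ) := by exact_mod_cast hn
    have hBR : (boundaryCard A : ℝ) + 2 * k ≤ 2 * n * k + 2 := by
      have : ((boundaryCard A + 2 * A.card : ℕ) : ℝ) ≤ ((2 * n * A.card + 2 : ℕ) : ℝ) := by
        exact_mod_cast hbound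
      push_cast at this
      linarith
    have hkpos : (0 : ℝ) < k := by linarith
    have hnpos : (0 : ℝ) < (n : ℝ) := by linarith
    have hkε : 1 ≤ ε * ((n : ℝ) * k) := by
      have h2 : 1 / ((n : ℝ) * ε) < k := lt_of_lt_of_le hN hkN
      rw [div_lt_iff₀ (by positivity)] at h2
      nlinarith
    have hdenpos : (0 : ℝ) < 2 * (n : ℝ) * k := by positivity
    have h2 : (boundaryCard A : ℝ) / (2 * n * k) ≤ (n - 1) / n + ε := by
      rw [div_le_iff₀ hdenpos]
      have hfrac : ((n : ℝ) - 1) / n * (2 * n * k) = 2 * ((n : ℝ) - 1) * k := by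
        field_simp
      have : (((n : ℝ) - 1) / n + ε) * (2 * n * k)
          = 2 * ((n : ℝ) - 1) * k + ε * (n * k) * 2 := by
        rw [add_mul, hfrac]; ring
      rw [this]
      nlinarith
    exact le_trans h1 h2
  exact le_of_forall_pos_le_add key

end JM
end
end
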